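/- arXiv:2603.21021 — 5 statements merged into one kernel-verified Lean document; each statement's English description precedes it below -/
import Mathlib

section
/- Let m and n be positive integers with m even, let A be an m×n matrix and Y = (Y_{i,j})_{1≤i,j≤n} a skew-symmetric n×n matrix over a commutative ring. Then Σ_{I⊆[n], |I|=m} Pf(Y_{I,I}) · det(Aᴵ) = Pf(A·Y·Aᵗ). -/
open Matrix

/-- The Pfaffian of a `2k × 2k` matrix, defined as the sum over perfect matchings
of `{1, …, 2k}` (encoded by the permutation listing the matched pairs
`(σ(1),σ(2)), (σ(3),σ(4)), …` in normal form, whose sign equals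
`(−1)^{cr(μ)}` for the matching `μ`) of the sign of the matching times the
product of the corresponding matrix entries. -/
def pfaffian {R : Type*} [CommRing R] {k : ℕ} (Y : Matrix (Fin (2*k)) (Fin (2*k)) R) : R :=
  ∑ σ ∈ Finset.univ.filter (fun σ : Equiv.Perm (Fin (2*k)) =>
      (∀ i : Fin k,
        σ ⟨2*(i:ℕ), by have := i.isLt; omega⟩ < σ ⟨2*(i:ℕ)+1, by have := i.isLt; omega⟩) ∧
      (∀ i j : Fin k, i < j →
        σ ⟨2*(i:ℕ), by have := i.isLt; omega⟩ < σ ⟨2*(j:ℕ), by have := j.isLt; omega⟩)),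
    ((Equiv.Perm.sign σ : ℤ) : R) *
      ∏ i : Fin k, Y (σ ⟨2*(i:ℕ), by have := i.isLt; omega⟩) (σ ⟨2*(i:ℕ)+1, by have := i.isLt; omega⟩)

/-- Strictly increasing functions `Fin k → Fin n`; these encode the `k`-element
subsets of `{1,…,n}` listed in increasing order. -/
def incrFuns (k n : ℕ) : Finset (Fin k → Fin n) :=
  Finset.univ.filter fun f => ∀ a b : Fin k, a < b → f a < f b


open Equiv Finset

namespace IW

variable {k n : ℕ}

/-- `Fin k × Bool ≃ Fin (2*k)`, `(i,b) ↦ 2i + b`. -/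
def dd (k : ℕ) : Fin k × Bool ≃ Fin (2 * k) where
  toFun p := ⟨2 * p.1.val + p.2.toNat, by have := p.1.isLt; cases p.2 <;> simp <;> omega⟩
  invFun x := (⟨x.val / 2, by have := x.isLt; omega⟩, decide (x.val % 2 = 1))
  left_inv p := by
    cases p with
    | mk i b =>
      cases b <;> simp [Fin.ext_iff] <;> omega
  right_inv x := by
    have := x.isLt
    by_cases h : x.val % 2 = 1 <;> simp [h, Fin.ext_iff] <;> omega

lemma dd_false (i : Fin k) (h) : (⟨2 * (i : ℕ), h⟩ : Fin (2 * k)) = dd k (i, false) := Fin.ext (by simp [dd])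

lemma dd_true (i : Fin k) (h) : (⟨2 * (i : ℕ) + 1, h⟩ : Fin (2 * k)) = dd k (i, true) := Fin.ext (by simp [dd])


/-- The hyperoctahedral permutation of `Fin k × Bool`. -/
def ppAux (c : Perm (Fin k)) (ε : Fin k → Bool) : Perm (Fin k × Bool) where
  toFun p := (c p.1, xor p.2 (ε p.1))
  invFun p := (c.symm p.1, xor p.2 (ε (c.symm p.1)))
  left_inv p := by cases p with | mk i b => simp [Bool.xor_assoc]
  right_inv p := by cases p with | mk i b => simp [Bool.xor_assoc]

/-- The hyperoctahedral permutation of `Fin (2*k)`: permutes the pairs via `c`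
and flips within pair `i` iff `ε i`. -/
def pp (c : Perm (Fin k)) (ε : Fin k → Bool) : Perm (Fin (2 * k)) :=
  (dd k).permCongr (ppAux c ε)

lemma pp_apply (c : Perm (Fin k)) (ε : Fin k → Bool) (i : Fin k) (b : Bool) :
    pp c ε (dd k (i, b)) = dd k (c i, xor b (ε i)) := by
  simp [pp, ppAux, Equiv.permCongr_apply]

lemma pp_mul (c d : Perm (Fin k)) (ε δ : Fin k → Bool) :
    pp c ε * pp d δ = pp (c * d) (fun i => xor (δ i) (ε (d i))) := by
  apply Equiv.ext
  intro x
  obtain ⟨⟨i, b⟩, rfl⟩ := (dd k).surjective x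
  simp [Equiv.Perm.mul_apply, pp_apply, Bool.xor_assoc]

lemma pp_one : pp (1 : Perm (Fin k)) (fun _ => false) = 1 := by
  apply Equiv.ext
  intro x
  obtain ⟨⟨i, b⟩, rfl⟩ := (dd k).surjective x
  simp [pp_apply]

lemma pp_inv (c : Perm (Fin k)) (ε : Fin k → Bool) :
    (pp c ε)⁻¹ = pp c⁻¹ (fun i => ε (c⁻¹ i)) := by
  rw [eq_comm, eq_inv_iff_mul_eq_one, pp_mul]
  convert pp_one using 2
  · simp
  · funext i; simp

lemma sign_pp (c : Perm (Fin k)) (ε : Fin k → Bool) :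
    Equiv.Perm.sign (pp c ε) = ∏ i : Fin k, (if ε i then (-1 : ℤˣ) else 1) := by
  have h1 : ppAux c ε = ppAux c (fun _ => false) * ppAux 1 ε := by
    apply Equiv.ext; rintro ⟨i, b⟩; simp [ppAux, Equiv.Perm.mul_apply]
  have h2 : ppAux (1 : Perm (Fin k)) ε = Equiv.prodCongrRight
      (fun i : Fin k => if ε i then Equiv.swap false true else 1) := by
    apply Equiv.ext; rintro ⟨i, b⟩
    by_cases h : ε i <;> cases b <;> simp [ppAux, h, Equiv.prodCongrRight, Equiv.swap_apply_of_ne_of_ne]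
  have h3 : ppAux c (fun _ => false) = Equiv.prodCongr c (Equiv.refl Bool) := by
    apply Equiv.ext; rintro ⟨i, b⟩; simp [ppAux]
  have hsc : Equiv.Perm.sign (ppAux c (fun _ => false)) = 1 := by
    rw [h3]
    refine Equiv.Perm.swap_induction_on c (by
      have : Equiv.prodCongr (Equiv.refl (Fin k)) (Equiv.refl Bool) = 1 := by
        apply Equiv.ext; rintro ⟨i, b⟩; simp
      simp [Equiv.Perm.one_def, this]) ?_
    intro f x y hxy ih
    · 
        have : Equiv.prodCongr (Equiv.swap x y * f) (Equiv.refl Bool)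
            = Equiv.prodCongr (Equiv.swap x y) (Equiv.refl Bool) * Equiv.prodCongr f (Equiv.refl Bool) := by
          apply Equiv.ext; rintro ⟨i, b⟩; simp [Equiv.Perm.mul_apply]
        rw [this, _root_.map_mul, ih]
        have : Equiv.prodCongr (Equiv.swap x y) (Equiv.refl Bool)
            = Equiv.swap (x, false) (y, false) * Equiv.swap (x, true) (y, true) := by
          apply Equiv.ext; rintro ⟨i, b⟩
          rcases eq_or_ne i x with rfl | hix <;> rcases eq_or_ne i y with rfl | hiy <;>
            cases b <;>
            simp_all [Equiv.Perm.mul_apply, Equiv.swap_apply_of_ne_of_ne, Equiv.swap_apply_def] <;> tauto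
        rw [this, _root_.map_mul]
        simp [Equiv.Perm.sign_swap, hxy]
  calc Equiv.Perm.sign (pp c ε) = Equiv.Perm.sign (ppAux c ε) := by
        simp [pp, Equiv.Perm.sign_permCongr]
    _ = _ := by
        rw [h1, _root_.map_mul, hsc, one_mul, h2, Equiv.Perm.sign_prodCongrRight]
        congr 1; funext i; by_cases h : ε i <;> simp [h]


/-- The canonical matching permutations. -/
def Pset (k : ℕ) : Finset (Perm (Fin (2 * k))) :=
  Finset.univ.filter (fun σ =>
    (∀ i : Fin k, σ (dd k (i, false)) < σ (dd k (i, true))) ∧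
    (∀ i j : Fin k, i < j → σ (dd k (i, false)) < σ (dd k (j, false))))

variable {R : Type*} [CommRing R]

/-- The term of the Pfaffian sum. -/
def tm (σ : Perm (Fin (2 * k))) (M : Matrix (Fin (2 * k)) (Fin (2 * k)) R) : R :=
  ((Equiv.Perm.sign σ : ℤ) : R) *
    ∏ i : Fin k, M (σ (dd k (i, false))) (σ (dd k (i, true)))

lemma skew_apply {M : Matrix (Fin (2 * k)) (Fin (2 * k)) R} (hM : Mᵀ = -M)
    (a b : Fin (2 * k)) : M b a = -M a b := by
  have := congrFun (congrFun hM a) b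
  simpa [Matrix.transpose_apply] using this

lemma tm_mul_pp {M : Matrix (Fin (2 * k)) (Fin (2 * k)) R} (hM : Mᵀ = -M)
    (σ : Perm (Fin (2 * k))) (c : Perm (Fin k)) (ε : Fin k → Bool) :
    tm (σ * pp c ε) M = tm σ M := by
  classical
  set s : R := ∏ i : Fin k, (if ε i then (-1 : R) else 1) with hs
  have hss : s * s = 1 := by
    rw [hs, ← Finset.prod_mul_distrib]
    apply Finset.prod_eq_one
    intro i _
    by_cases h : ε i <;> simp [h]
  have hsign : ((Equiv.Perm.sign (σ * pp c ε) : ℤ) : R) = ((Equiv.Perm.sign σ : ℤ) : R) * s := by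
    rw [_root_.map_mul, sign_pp]
    push_cast
    congr 1
    rw [hs]
    push_cast
    apply Finset.prod_congr rfl
    intro i _
    by_cases h : ε i <;> simp [h]
  have happ : ∀ i b, (σ * pp c ε) (dd k (i, b)) = σ (dd k (c i, xor b (ε i))) := by
    intro i b
    simp [Equiv.Perm.mul_apply, pp_apply]
  have hprod : ∏ i : Fin k, M ((σ * pp c ε) (dd k (i, false))) ((σ * pp c ε) (dd k (i, true)))
      = s * ∏ i : Fin k, M (σ (dd k (i, false))) (σ (dd k (i, true))) := by
    have h1 : ∀ i : Fin k, M ((σ * pp c ε) (dd k (i, false))) ((σ * pp c ε) (dd k (i, true)))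
        = (if ε i then (-1 : R) else 1) * M (σ (dd k (c i, false))) (σ (dd k (c i, true))) := by
      intro i
      rw [happ, happ]
      by_cases h : ε i
      · simp only [h, if_true, Bool.false_xor, Bool.true_xor, Bool.not_true]
        rw [skew_apply hM]
        ring
      · simp only [eq_false_of_ne_true h, Bool.false_xor, Bool.true_xor, Bool.not_false]
        norm_num
    rw [Finset.prod_congr rfl (fun i _ => h1 i), Finset.prod_mul_distrib, ← hs]
    congr 1
    exact Equiv.prod_comp c (fun j => M (σ (dd k (j, false))) (σ (dd k (j, true))))
  rw [tm, tm, hsign, hprod, mul_assoc, ← mul_assoc s s, hss, one_mul]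

lemma mem_Pset_iff (ρ : Perm (Fin (2 * k))) : ρ ∈ Pset k ↔
    (∀ i : Fin k, ρ (dd k (i, false)) < ρ (dd k (i, true))) ∧
    (∀ i j : Fin k, i < j → ρ (dd k (i, false)) < ρ (dd k (j, false))) := by
  simp [Pset]

lemma canon_unique {ρ ρ' : Perm (Fin (2 * k))} (hρ : ρ ∈ Pset k) (hρ' : ρ' ∈ Pset k)
    {c : Perm (Fin k)} {ε : Fin k → Bool} (h : ρ' = ρ * pp c ε) : ρ' = ρ := by
  rw [mem_Pset_iff] at hρ hρ'
  have happ : ∀ i b, ρ' (dd k (i, b)) = ρ (dd k (c i, xor b (ε i))) := by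
    intro i b
    rw [h]
    simp [Equiv.Perm.mul_apply, pp_apply]
  have hε : ∀ i, ε i = false := by
    intro i
    by_contra h'
    have hεi : ε i = true := by simpa using h'
    have h1 := hρ'.1 i
    rw [happ, happ, hεi] at h1
    simp only [Bool.false_xor, Bool.true_xor, Bool.not_true] at h1
    exact absurd (hρ.1 (c i)) (not_lt.mpr (le_of_lt h1))
  have happ' : ∀ i b, ρ' (dd k (i, b)) = ρ (dd k (c i, b)) := by
    intro i b
    rw [happ, hε]
    cases b <;> rfl
  have hcmono : StrictMono c := by
    intro i j hij
    have h2 := hρ'.2 i j hij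
    rw [happ', happ'] at h2
    rcases lt_trichotomy (c i) (c j) with h3 | h3 | h3
    · exact h3
    · rw [h3] at h2; exact absurd h2 (lt_irrefl _)
    · exact absurd (hρ.2 _ _ h3) (not_lt.mpr (le_of_lt h2))
  have hc : c = 1 := by
    apply Equiv.ext
    intro x
    have h2 := Fin.coe_orderIso_apply
      (StrictMono.orderIsoOfSurjective (⇑c) hcmono c.surjective) x
    exact Fin.ext h2
  have hε' : ε = fun _ => false := funext hε
  rw [h, hc, hε', pp_one, mul_one]

lemma canon_exists (σ : Perm (Fin (2 * k))) : ∃ ρ ∈ Pset k, ∃ c ε, σ = ρ * pp c ε := by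
  classical
  set ε' : Fin k → Bool := fun i => decide (σ (dd k (i, true)) < σ (dd k (i, false))) with hε'
  set m : Fin k → Fin (2 * k) := fun i => σ (dd k (i, ε' i)) with hm
  have hminj : Function.Injective m := by
    intro i j hij
    have := σ.injective hij
    have := (dd k).injective this
    exact (Prod.mk.injEq _ _ _ _ ▸ this).1
  set c := Tuple.sort m with hc
  have hmono : StrictMono (m ∘ c) :=
    (Tuple.monotone_sort m).strictMono_of_injective (hminj.comp c.injective)
  set ρ := σ * pp c (fun i => ε' (c i)) with hρ
  have happ : ∀ i b, ρ (dd k (i, b)) = σ (dd k (c i, xor b (ε' (c i)))) := by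
    intro i b
    rw [hρ]
    simp [Equiv.Perm.mul_apply, pp_apply]
  have hmem : ρ ∈ Pset k := by
    rw [mem_Pset_iff]
    constructor
    · intro i
      rw [happ, happ]
      simp only [Bool.false_xor, Bool.true_xor]
      by_cases h : ε' (c i)
      · rw [h]
        simp only [Bool.not_true]
        have : σ (dd k (c i, true)) < σ (dd k (c i, false)) := by
          have := h
          rw [hε'] at this
          exact of_decide_eq_true this
        exact this
      · have hfalse : ε' (c i) = false := eq_false_of_ne_true h
        rw [hfalse]
        simp only [Bool.not_false]
        have hne : σ (dd k (c i, false)) ≠ σ (dd k (c i, true)) := by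
          intro hcontra
          have := (dd k).injective (σ.injective hcontra)
          simp at this
        have hnlt : ¬ σ (dd k (c i, true)) < σ (dd k (c i, false)) := by
          intro hcontra
          rw [hε'] at hfalse
          exact absurd hfalse (by simp [hcontra])
        exact lt_of_le_of_ne (not_lt.mp hnlt) hne
    · intro i j hij
      have h1 : ρ (dd k (i, false)) = (m ∘ c) i := by
        rw [happ]
        simp only [Bool.false_xor]
        rfl
      have h2 : ρ (dd k (j, false)) = (m ∘ c) j := by
        rw [happ]
        simp only [Bool.false_xor]
        rfl
      rw [h1, h2]
      exact hmono hij
  refine ⟨ρ, hmem, c⁻¹, (fun j => ε' (c (c⁻¹ j))), ?_⟩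
  have : pp c⁻¹ (fun j => ε' (c (c⁻¹ j))) = (pp c (fun i => ε' (c i)))⁻¹ := by
    rw [pp_inv]
  rw [this, hρ, mul_inv_cancel_right]

/-- Canonicalization of a permutation to its canonical matching form. -/
noncomputable def canon (σ : Perm (Fin (2 * k))) : Perm (Fin (2 * k)) :=
  (canon_exists σ).choose

lemma canon_mem (σ : Perm (Fin (2 * k))) : canon σ ∈ Pset k :=
  (canon_exists σ).choose_spec.1

lemma canon_spec (σ : Perm (Fin (2 * k))) : ∃ c ε, σ = canon σ * pp c ε :=
  (canon_exists σ).choose_spec.2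

lemma canon_eq_of {σ ρ : Perm (Fin (2 * k))} (hρ : ρ ∈ Pset k)
    (h : ∃ c ε, σ = ρ * pp c ε) : canon σ = ρ := by
  obtain ⟨c, ε, hce⟩ := h
  obtain ⟨c', ε', hce'⟩ := canon_spec σ
  have : ρ = canon σ * (pp c' ε' * (pp c ε)⁻¹) := by
    rw [← mul_assoc, ← hce', hce, mul_inv_cancel_right]
  rw [pp_inv, pp_mul] at this
  exact (canon_unique (canon_mem σ) hρ this).symm

lemma canon_of_mem {ρ : Perm (Fin (2 * k))} (hρ : ρ ∈ Pset k) : canon ρ = ρ :=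
  canon_eq_of hρ ⟨1, fun _ => false, by rw [pp_one, mul_one]⟩

lemma canon_mul_pp (σ : Perm (Fin (2 * k))) (c : Perm (Fin k)) (ε : Fin k → Bool) :
    canon (σ * pp c ε) = canon σ := by
  obtain ⟨c', ε', hce'⟩ := canon_spec σ
  apply canon_eq_of (canon_mem σ)
  refine ⟨c' * c, fun i => xor (ε i) (ε' (c i)), ?_⟩
  conv_lhs => rw [hce']
  rw [mul_assoc, pp_mul]

lemma tm_canon {M : Matrix (Fin (2 * k)) (Fin (2 * k)) R} (hM : Mᵀ = -M)
    (σ : Perm (Fin (2 * k))) : tm (canon σ) M = tm σ M := by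
  obtain ⟨c, ε, hce⟩ := canon_spec σ
  conv_rhs => rw [hce]
  rw [tm_mul_pp hM]


lemma pfaffian_eq (M : Matrix (Fin (2 * k)) (Fin (2 * k)) R) :
    pfaffian M = ∑ σ ∈ Pset k, tm σ M := by
  unfold pfaffian Pset tm
  simp only [dd_false, dd_true]

lemma sign_sq (τ : Perm (Fin (2 * k))) :
    ((Equiv.Perm.sign τ : ℤ) : R) * ((Equiv.Perm.sign τ : ℤ) : R) = 1 := by
  rw [← Int.cast_mul, ← Units.val_mul, Int.units_mul_self]
  simp

lemma canon_mul_pp_inv (σ : Perm (Fin (2 * k))) (c : Perm (Fin k)) (ε : Fin k → Bool) :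
    canon (σ * (pp c ε)⁻¹) = canon σ := by
  rw [pp_inv, canon_mul_pp]

lemma canon_cancel {τ σ' ρ : Perm (Fin (2 * k))} (hρ : ρ ∈ Pset k) (hτ : σ' * τ = 1) :
    canon (σ' * canon (τ * ρ)) = ρ := by
  obtain ⟨c, ε, h⟩ := canon_spec (τ * ρ)
  have h3 : (σ' * canon (τ * ρ)) * pp c ε = ρ := by
    rw [mul_assoc, ← h, ← mul_assoc, hτ, one_mul]
  have h2 : σ' * canon (τ * ρ) = ρ * (pp c ε)⁻¹ :=
    eq_mul_inv_iff_mul_eq.mpr h3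
  rw [h2, canon_mul_pp_inv, canon_of_mem hρ]

lemma tm_mul_left {M : Matrix (Fin (2 * k)) (Fin (2 * k)) R}
    (τ ρ : Perm (Fin (2 * k))) :
    tm (τ * ρ) M = ((Equiv.Perm.sign τ : ℤ) : R) *
      (((Equiv.Perm.sign ρ : ℤ) : R) *
        ∏ i : Fin k, M (τ (ρ (dd k (i, false)))) (τ (ρ (dd k (i, true))))) := by
  unfold tm
  rw [_root_.map_mul]
  push_cast
  rw [mul_assoc]
  rfl

/-- Relabelling lemma: `Pf(M ∘ τ) = sign τ · Pf M` for skew-symmetric `M`. -/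
lemma pfaffian_submatrix_perm {M : Matrix (Fin (2 * k)) (Fin (2 * k)) R} (hM : Mᵀ = -M)
    (τ : Perm (Fin (2 * k))) :
    pfaffian (M.submatrix τ τ) = ((Equiv.Perm.sign τ : ℤ) : R) * pfaffian M := by
  rw [pfaffian_eq, pfaffian_eq, Finset.mul_sum]
  have hterm : ∀ ρ ∈ Pset k, tm ρ (M.submatrix τ τ)
      = ((Equiv.Perm.sign τ : ℤ) : R) * tm (canon (τ * ρ)) M := by
    intro ρ _
    rw [tm_canon hM, tm_mul_left, ← mul_assoc, ← mul_assoc, sign_sq, one_mul]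
    unfold tm
    simp only [Matrix.submatrix_apply]
  rw [Finset.sum_congr rfl hterm]
  apply Finset.sum_nbij' (fun ρ => canon (τ * ρ)) (fun ρ => canon (τ⁻¹ * ρ))
  · intro ρ _; exact canon_mem _
  · intro ρ _; exact canon_mem _
  · intro ρ hρ; exact canon_cancel hρ (inv_mul_cancel τ)
  · intro ρ hρ; exact canon_cancel hρ (mul_inv_cancel τ)
  · intro ρ _; rfl

/-- Vanishing lemma: the Pfaffian of `Y.submatrix g g` vanishes when `g` is not injective. -/
lemma pfaffian_submatrix_eq_zero {Y : Matrix (Fin n) (Fin n) R} (hY : Yᵀ = -Y)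
    (hdiag : ∀ i, Y i i = 0) {g : Fin (2 * k) → Fin n} {a b : Fin (2 * k)}
    (hab : a ≠ b) (hg : g a = g b) : pfaffian (Y.submatrix g g) = 0 := by
  classical
  set M : Matrix (Fin (2 * k)) (Fin (2 * k)) R := Y.submatrix g g with hMdef
  have hM : Mᵀ = -M := by
    ext x y
    have := congrFun (congrFun hY (g x)) (g y)
    simpa [hMdef, Matrix.transpose_apply] using this
  have hgswap : ∀ x, g (Equiv.swap a b x) = g x := by
    intro x
    rcases eq_or_ne x a with rfl | hxa
    · rw [Equiv.swap_apply_left, hg]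
    rcases eq_or_ne x b with rfl | hxb
    · rw [Equiv.swap_apply_right, hg]
    · rw [Equiv.swap_apply_of_ne_of_ne hxa hxb]
  have hMswap : ∀ x y, M (Equiv.swap a b x) (Equiv.swap a b y) = M x y := by
    intro x y
    simp [hMdef, Matrix.submatrix_apply, hgswap]
  rw [pfaffian_eq]
  apply Finset.sum_involution (g := fun ρ _ => canon (Equiv.swap a b * ρ))
  · -- sum of pairs is zero
    intro ρ hρ
    rw [tm_canon hM, tm_mul_left]
    simp only [hMswap]
    have hsw : ((Equiv.Perm.sign (Equiv.swap a b) : ℤ) : R) = -1 := by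
      rw [Equiv.Perm.sign_swap hab]; simp
    rw [hsw]
    unfold tm
    ring
  · -- fixed points have zero terms
    intro ρ hρ hne
    intro hfix
    apply hne
    obtain ⟨c, ε, h⟩ := canon_spec (Equiv.swap a b * ρ)
    rw [hfix] at h
    have hppeq : pp c ε = Equiv.swap (ρ⁻¹ a) (ρ⁻¹ b) := by
      have h2 : pp c ε = ρ⁻¹ * (Equiv.swap a b * ρ) := by
        rw [h, ← mul_assoc, inv_mul_cancel, one_mul]
      rw [h2, ← mul_assoc]
      rw [Equiv.swap_apply_apply ρ⁻¹ a b]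
      simp
    have huv : ρ⁻¹ a ≠ ρ⁻¹ b := fun hc => hab (by simpa using congrArg ρ hc)
    obtain ⟨⟨iu, bu⟩, hu⟩ := (dd k).surjective (ρ⁻¹ a)
    have hv : ρ⁻¹ b = dd k (iu, !bu) := by
      by_contra hvne
      have hwu : dd k (iu, !bu) ≠ ρ⁻¹ a := by
        rw [← hu]
        intro hc
        have := (dd k).injective hc
        simp at this
      have hfix2 : pp c ε (dd k (iu, !bu)) = dd k (iu, !bu) := by
        rw [hppeq, Equiv.swap_apply_of_ne_of_ne hwu (Ne.symm hvne)]
      rw [pp_apply] at hfix2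
      have hc2 := (dd k).injective hfix2
      have hciu : c iu = iu := (Prod.mk.injEq _ _ _ _ ▸ hc2).1
      have hεiu : ε iu = false := by
        have := (Prod.mk.injEq _ _ _ _ ▸ hc2).2
        cases hb : bu <;> cases hε : ε iu <;> simp_all
      have : pp c ε (dd k (iu, bu)) = dd k (iu, bu) := by
        rw [pp_apply, hciu, hεiu]
        cases bu <;> rfl
      rw [hppeq, hu, Equiv.swap_apply_left] at this
      exact huv ((hu ▸ this : ρ⁻¹ b = ρ⁻¹ a).symm ▸ rfl)
    -- the iu-th factor vanishes
    have hfac : M (ρ (dd k (iu, false))) (ρ (dd k (iu, true))) = 0 := by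
      have hz : Y (g a) (g b) = 0 := by rw [← hg, hdiag]
      have hz' : Y (g b) (g a) = 0 := by rw [hg, hdiag]
      cases hb : bu
      · rw [hb] at hu hv
        have h1 : ρ (dd k (iu, false)) = a := by rw [hu]; simp
        have h2 : ρ (dd k (iu, true)) = b := by
          rw [show dd k (iu, true) = ρ⁻¹ b from by rw [hv]; rfl]; simp
        rw [h1, h2]
        simpa [hMdef] using hz
      · rw [hb] at hu hv
        have h1 : ρ (dd k (iu, true)) = a := by rw [hu]; simp
        have h2 : ρ (dd k (iu, false)) = b := by
          rw [show dd k (iu, false) = ρ⁻¹ b from by rw [hv]; rfl]; simp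
        rw [h1, h2]
        simpa [hMdef] using hz'
    unfold tm
    rw [Finset.prod_eq_zero (Finset.mem_univ iu) hfac, mul_zero]
  · intro ρ hρ; exact canon_cancel hρ (Equiv.swap_mul_self a b)
  · intro ρ _; exact canon_mem _


section Expansion

variable (A : Matrix (Fin (2 * k)) (Fin n) R) (Y : Matrix (Fin n) (Fin n) R)

lemma entry_expand (u v : Fin (2 * k)) :
    (A * Y * Aᵀ) u v = ∑ z : Fin n × Fin n, A u z.1 * Y z.1 z.2 * A v z.2 := by
  rw [Fintype.sum_prod_type]
  rw [Matrix.mul_apply]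
  rw [Finset.sum_comm]
  apply Finset.sum_congr rfl
  intro q _
  rw [Matrix.mul_apply, Finset.sum_mul]
  apply Finset.sum_congr rfl
  intro p _
  rw [Matrix.transpose_apply]

/-- Glue a `Fin k`-indexed family of pairs into a function on `Fin (2*k)`. -/
def glue (F : Fin k → Fin n × Fin n) : Fin (2 * k) → Fin n := fun x =>
  if ((dd k).symm x).2 then (F ((dd k).symm x).1).2 else (F ((dd k).symm x).1).1

lemma glue_false (F : Fin k → Fin n × Fin n) (i : Fin k) :
    glue F (dd k (i, false)) = (F i).1 := by simp [glue]

lemma glue_true (F : Fin k → Fin n × Fin n) (i : Fin k) :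
    glue F (dd k (i, true)) = (F i).2 := by simp [glue]

/-- Split a function on `Fin (2*k)` into a family of pairs. -/
def unglue (g : Fin (2 * k) → Fin n) : Fin k → Fin n × Fin n := fun i =>
  (g (dd k (i, false)), g (dd k (i, true)))

lemma glue_bijective : Function.Bijective (glue (k := k) (n := n)) := by
  rw [Function.bijective_iff_has_inverse]
  refine ⟨unglue, ?_, ?_⟩
  · intro F
    funext i
    refine Prod.ext ?_ ?_ <;> simp [unglue, glue_false, glue_true]
  · intro g
    funext x
    obtain ⟨⟨i, b⟩, rfl⟩ := (dd k).surjective x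
    cases b
    · rw [show glue (unglue g) (dd k (i, false)) = _ from glue_false _ i]; rfl
    · rw [show glue (unglue g) (dd k (i, true)) = _ from glue_true _ i]; rfl

lemma comp_perm_bijective (σ : Perm (Fin (2 * k))) :
    Function.Bijective (fun h : Fin (2 * k) → Fin n => h ∘ σ) := by
  rw [Function.bijective_iff_has_inverse]
  exact ⟨fun h => h ∘ σ.symm, fun h => by funext x; simp, fun h => by funext x; simp⟩

lemma prod_A_split (h : Fin (2 * k) → Fin n) (σ : Perm (Fin (2 * k))) :
    ∏ x : Fin (2 * k), A x (h x)
      = ∏ i : Fin k, A (σ (dd k (i, false))) (h (σ (dd k (i, false))))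
          * A (σ (dd k (i, true))) (h (σ (dd k (i, true)))) := by
  rw [← Equiv.prod_comp σ (fun x => A x (h x)),
    ← Equiv.prod_comp (dd k) (fun x => A (σ x) (h (σ x))), Fintype.prod_prod_type]
  apply Finset.prod_congr rfl
  intro i _
  rw [Fintype.prod_bool]
  ring

lemma tm_expand (σ : Perm (Fin (2 * k))) :
    tm σ (A * Y * Aᵀ) = ∑ g : Fin (2 * k) → Fin n,
      (∏ x : Fin (2 * k), A x (g x)) * tm σ (Y.submatrix g g) := by
  calc tm σ (A * Y * Aᵀ)
      = ((Equiv.Perm.sign σ : ℤ) : R) * ∏ i : Fin k, ∑ z : Fin n × Fin n,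
          A (σ (dd k (i, false))) z.1 * Y z.1 z.2 * A (σ (dd k (i, true))) z.2 := by
        unfold tm; simp only [entry_expand A Y]
    _ = ∑ F : Fin k → Fin n × Fin n, ((Equiv.Perm.sign σ : ℤ) : R) * ∏ i : Fin k,
          A (σ (dd k (i, false))) (F i).1 * Y (F i).1 (F i).2
            * A (σ (dd k (i, true))) (F i).2 := by
        rw [Fintype.prod_sum (fun i (z : Fin n × Fin n) =>
          A (σ (dd k (i, false))) z.1 * Y z.1 z.2 * A (σ (dd k (i, true))) z.2),
          Finset.mul_sum]
    _ = ∑ g : Fin (2 * k) → Fin n, ((Equiv.Perm.sign σ : ℤ) : R) * ∏ i : Fin k,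
          A (σ (dd k (i, false))) (g (dd k (i, false)))
            * Y (g (dd k (i, false))) (g (dd k (i, true)))
            * A (σ (dd k (i, true))) (g (dd k (i, true))) :=
        Fintype.sum_bijective _ glue_bijective _ _ (fun F => by
          congr 1
          apply Finset.prod_congr rfl
          intro i _
          rw [glue_false, glue_true])
    _ = ∑ h : Fin (2 * k) → Fin n, ((Equiv.Perm.sign σ : ℤ) : R) * ∏ i : Fin k,
          A (σ (dd k (i, false))) (h (σ (dd k (i, false))))
            * Y (h (σ (dd k (i, false)))) (h (σ (dd k (i, true))))
            * A (σ (dd k (i, true))) (h (σ (dd k (i, true)))) :=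
        Fintype.sum_bijective _ (comp_perm_bijective σ⁻¹) _ _ (fun g => by
          congr 1
          apply Finset.prod_congr rfl
          intro i _
          simp)
    _ = _ := by
        apply Finset.sum_congr rfl
        intro h _
        have hsplit : (∏ i : Fin k, A (σ (dd k (i, false))) (h (σ (dd k (i, false))))
              * Y (h (σ (dd k (i, false)))) (h (σ (dd k (i, true))))
              * A (σ (dd k (i, true))) (h (σ (dd k (i, true)))))
            = (∏ i : Fin k, A (σ (dd k (i, false))) (h (σ (dd k (i, false))))
                * A (σ (dd k (i, true))) (h (σ (dd k (i, true)))))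
              * ∏ i : Fin k, Y (h (σ (dd k (i, false)))) (h (σ (dd k (i, true)))) := by
          rw [← Finset.prod_mul_distrib]
          apply Finset.prod_congr rfl
          intro i _
          ring
        rw [hsplit, ← prod_A_split A h σ]
        unfold tm
        simp only [Matrix.submatrix_apply]
        ring

lemma pfaffian_mul : pfaffian (A * Y * Aᵀ) = ∑ g : Fin (2 * k) → Fin n,
    (∏ x : Fin (2 * k), A x (g x)) * pfaffian (Y.submatrix g g) := by
  rw [pfaffian_eq]
  rw [Finset.sum_congr rfl (fun σ _ => tm_expand A Y σ), Finset.sum_comm]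
  apply Finset.sum_congr rfl
  intro g _
  rw [pfaffian_eq, Finset.mul_sum]

end Expansion


lemma skew_submatrix {Y : Matrix (Fin n) (Fin n) R} (hY : Yᵀ = -Y)
    (f : Fin (2 * k) → Fin n) : (Y.submatrix f f)ᵀ = -(Y.submatrix f f) := by
  ext x y
  have := congrFun (congrFun hY (f x)) (f y)
  simpa [Matrix.transpose_apply] using this

end IW

open IW in
/-- The Pfaffian minor summation formula of Ishikawa and Wakayama: for `m = 2k` even,
an `m × n` matrix `A` and a skew-symmetric `n × n` matrix `Y`,
`Σ_{I⊆[n], |I|=m} Pf(Y_{I,I}) det(Aᴵ) = Pf(A·Y·Aᵗ)`. -/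
theorem ishikawa_wakayama_minor_summation {R : Type*} [CommRing R] (k n : ℕ)
    (hk : 0 < k) (hn : 0 < n) (A : Matrix (Fin (2*k)) (Fin n) R)
    (Y : Matrix (Fin n) (Fin n) R) (hY : Yᵀ = -Y) (hdiag : ∀ i, Y i i = 0) :
    (∑ fI ∈ incrFuns (2*k) n, pfaffian (Y.submatrix fI fI) * (A.submatrix id fI).det)
      = pfaffian (A * Y * Aᵀ) := by
  classical
  calc (∑ fI ∈ incrFuns (2*k) n, pfaffian (Y.submatrix fI fI) * (A.submatrix id fI).det)
      = ∑ fI ∈ incrFuns (2*k) n, ∑ τ : Equiv.Perm (Fin (2*k)),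
          (∏ x : Fin (2*k), A x (fI (τ x))) * pfaffian (Y.submatrix (fI ∘ τ) (fI ∘ τ)) := by
        apply Finset.sum_congr rfl
        intro fI _
        rw [← Matrix.det_transpose, Matrix.det_apply', Finset.mul_sum]
        apply Finset.sum_congr rfl
        intro τ _
        have hsub : Y.submatrix (fI ∘ τ) (fI ∘ τ)
            = (Y.submatrix fI fI).submatrix τ τ := by
          rw [Matrix.submatrix_submatrix]
        rw [hsub, pfaffian_submatrix_perm (skew_submatrix hY fI) τ]
        simp only [Matrix.transpose_apply, Matrix.submatrix_apply, id]
        ring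
    _ = ∑ g ∈ Finset.univ.filter (fun g : Fin (2*k) → Fin n => Function.Injective g),
          (∏ x : Fin (2*k), A x (g x)) * pfaffian (Y.submatrix g g) := by
        rw [← Finset.sum_product' (s := incrFuns (2*k) n) (t := Finset.univ)]
        apply Finset.sum_nbij'
          (i := fun p : (Fin (2*k) → Fin n) × Equiv.Perm (Fin (2*k)) => p.1 ∘ ⇑p.2)
          (j := fun g => (g ∘ ⇑(Tuple.sort g), (Tuple.sort g)⁻¹))
        · rintro ⟨fI, τ⟩ hp
          rw [Finset.mem_product] at hp
          rw [Finset.mem_filter]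
          have hmono : StrictMono fI := fun a b hab =>
            (Finset.mem_filter.mp hp.1).2 a b hab
          exact ⟨Finset.mem_univ _, hmono.injective.comp τ.injective⟩
        · intro g hg
          have hginj : Function.Injective g := (Finset.mem_filter.mp hg).2
          rw [Finset.mem_product]
          constructor
          · rw [incrFuns, Finset.mem_filter]
            refine ⟨Finset.mem_univ _, ?_⟩
            intro a b hab
            exact ((Tuple.monotone_sort g).strictMono_of_injective
              (hginj.comp (Tuple.sort g).injective)) hab
          · exact Finset.mem_univ _
        · rintro ⟨fI, τ⟩ hp
          rw [Finset.mem_product] at hp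
          have hmono : StrictMono fI := fun a b hab =>
            (Finset.mem_filter.mp hp.1).2 a b hab
          have hginj : Function.Injective (fI ∘ ⇑τ) := hmono.injective.comp τ.injective
          set g : Fin (2*k) → Fin n := fI ∘ ⇑τ with hgdef
          have hsmono : StrictMono (g ∘ ⇑(Tuple.sort g)) :=
            (Tuple.monotone_sort g).strictMono_of_injective
              (hginj.comp (Tuple.sort g).injective)
          have hrange : Set.range (g ∘ ⇑(Tuple.sort g)) = Set.range fI := by
            rw [Set.range_comp, (Tuple.sort g).surjective.range_eq, Set.image_univ, hgdef,
              Set.range_comp, τ.surjective.range_eq, Set.image_univ]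
          have hfst : g ∘ ⇑(Tuple.sort g) = fI := by
            haveI : WellFoundedLT (Fin (2*k)) := inferInstance
            exact (hsmono.range_inj hmono).mp hrange
          have hsort : Tuple.sort g = τ⁻¹ := by
            apply Equiv.ext
            intro x
            have h1 : fI (τ ((Tuple.sort g) x)) = fI x := congrFun hfst x
            have h2 : τ ((Tuple.sort g) x) = x := hmono.injective h1
            have := congrArg (⇑τ⁻¹) h2
            simpa using this
          refine Prod.ext hfst ?_
          rw [hsort, inv_inv]
        · intro g hg
          funext x
          simp
        · rintro ⟨fI, τ⟩ _
          simp [Function.comp]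
    _ = ∑ g : Fin (2*k) → Fin n,
          (∏ x : Fin (2*k), A x (g x)) * pfaffian (Y.submatrix g g) := by
        apply Finset.sum_subset (Finset.filter_subset _ _)
        intro g _ hg
        rw [Finset.mem_filter] at hg
        push_neg at hg
        have : ¬ Function.Injective g := fun h => hg (Finset.mem_univ g) h
        rw [Function.not_injective_iff] at this
        obtain ⟨a, b, hgab, hab⟩ := this
        rw [pfaffian_submatrix_eq_zero hY hdiag hab hgab, mul_zero]
    _ = pfaffian (A * Y * Aᵀ) := (pfaffian_mul A Y).symm
end

section
/- Let m be an even positive integer, n a positive integer, I a subset of [n] with |I| = m, and Y = (Y_{i,j})_{1≤i,j≤n} a skew-symmetric n×n matrix over a commutative ring. Let X be the n×n upper triangular matrix with 0's on the main diagonal, X_{i,j} = Y_{i,j} for 1 ≤ i < j ≤ n, and X_{i,j} = 0 for i > j. Then Σ (−1)^{binom(m/2, 2) + inv(J,K)} det(X_{J,K}) = Pf(Y_{I,I}), where the sum is over all pairs of disjoint subsets J, K of [n] with |J| = |K| = m/2 and J ∪ K = I, and inv(J,K) denotes the number of pairs (j,k) with j ∈ J, k ∈ K and j > k. -/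
open Matrix

namespace PfAux

open Finset Equiv Equiv.Perm



variable {N : ℕ}

/-- number of inversions of a permutation of `Fin N` -/
def invCount (σ : Perm (Fin N)) : ℕ :=
  (((univ : Finset (Fin N)) ×ˢ univ).filter fun p => p.1 < p.2 ∧ σ p.2 < σ p.1).card

lemma sign_eq_signAux (σ : Perm (Fin N)) : Perm.sign σ = Perm.signAux σ := by
  rcases Nat.lt_or_ge N 2 with h | h
  · have hσ : σ = 1 := by
      ext x
      match N, h with
      | 0, _ => exact x.elim0
      | 1, _ =>
        have : Subsingleton (Fin 1) := by infer_instance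
        simp [Subsingleton.elim (σ x) x]
    rw [hσ, Perm.sign_one, Perm.signAux_one]
  · have hsurj : Function.Surjective (MonoidHom.mk' (Perm.signAux (n := N)) Perm.signAux_mul) := by
      intro u
      rcases Int.units_eq_one_or u with rfl | rfl
      · exact ⟨1, Perm.signAux_one N⟩
      · refine ⟨Equiv.swap ⟨0, by omega⟩ ⟨1, by omega⟩, Perm.signAux_swap ?_⟩
        simp [Fin.ext_iff]
    have := Perm.eq_sign_of_surjective_hom hsurj
    rw [← this]
    rfl

lemma sign_eq_pow_invCount (σ : Perm (Fin N)) : (Perm.sign σ : ℤˣ) = (-1) ^ invCount σ := by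
  rw [sign_eq_signAux, Perm.signAux]
  rw [Finset.prod_ite (f := fun _ => (-1 : ℤˣ)) (g := fun _ => (1:ℤˣ))]
  rw [Finset.prod_const, Finset.prod_const, one_pow, mul_one]
  congr 1
  refine Finset.card_nbij' (fun x => (x.2, x.1)) (fun p => ⟨p.2, p.1⟩) ?_ ?_ ?_ ?_
  · rintro ⟨a, b⟩ hx
    simp only [Finset.mem_coe, Finset.mem_filter, Perm.mem_finPairsLT] at hx
    obtain ⟨hba, hle⟩ := hx
    simp only [Finset.mem_coe, Finset.mem_filter, Finset.mem_product, Finset.mem_univ, true_and]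
    refine ⟨hba, lt_of_le_of_ne hle ?_⟩
    intro hEq
    exact absurd (σ.injective hEq) (ne_of_gt hba)
  · rintro ⟨p, q⟩ hp
    simp only [Finset.mem_coe, Finset.mem_filter, Finset.mem_product, Finset.mem_univ, true_and] at hp
    simp only [Finset.mem_coe, Finset.mem_filter, Perm.mem_finPairsLT]
    exact ⟨hp.1, le_of_lt hp.2⟩
  · rintro ⟨a, b⟩ _; rfl
  · rintro ⟨p, q⟩ _; rfl


variable {k : ℕ}

def pe (i : Fin k) : Fin (2 * k) := ⟨2 * i, by have := i.isLt; omega⟩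
def po (i : Fin k) : Fin (2 * k) := ⟨2 * i + 1, by have := i.isLt; omega⟩

lemma pe_lt_pe {i j : Fin k} : pe i < pe j ↔ i < j := by
  simp only [pe, Fin.mk_lt_mk, Fin.lt_def]; omega
lemma pe_lt_po {i j : Fin k} : pe i < po j ↔ i ≤ j := by
  simp only [pe, po, Fin.mk_lt_mk, Fin.le_def]; omega
lemma po_lt_pe {i j : Fin k} : po i < pe j ↔ i < j := by
  simp only [pe, po, Fin.mk_lt_mk, Fin.lt_def]; omega
lemma po_lt_po {i j : Fin k} : po i < po j ↔ i < j := by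
  simp only [po, Fin.mk_lt_mk, Fin.lt_def]; omega
lemma pe_ne_po {i j : Fin k} : pe i ≠ po j := by
  simp only [pe, po, ne_eq, Fin.mk.injEq]; omega

lemma pe_or_po (p : Fin (2 * k)) :
    ∃ i : Fin k, p = pe i ∨ p = po i := by
  have hp := p.isLt
  refine ⟨⟨p.1 / 2, by omega⟩, ?_⟩
  rcases Nat.even_or_odd p.1 with ⟨m, hm⟩ | ⟨m, hm⟩
  · left; simp only [pe, Fin.ext_iff]; omega
  · right; simp only [po, Fin.ext_iff]; omega

noncomputable def mkFun (S : Finset (Fin (2 * k))) (τ : Perm (Fin k)) :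
    Fin (2 * k) → Fin (2 * k) :=
  if h : S.card = k ∧ (univ \ S).card = k then
    fun p =>
      if he : (p : ℕ) % 2 = 0 then
        S.orderEmbOfFin h.1 ⟨(p : ℕ) / 2, by have := p.isLt; omega⟩
      else
        (univ \ S).orderEmbOfFin h.2 (τ ⟨(p : ℕ) / 2, by have := p.isLt; omega⟩)
  else id

lemma mkFun_pe {S : Finset (Fin (2 * k))} (h : S.card = k ∧ (univ \ S).card = k)
    (τ : Perm (Fin k)) (i : Fin k) : mkFun S τ (pe i) = S.orderEmbOfFin h.1 i := by
  rw [mkFun, dif_pos h]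
  have h2 : ((pe i : Fin (2*k)) : ℕ) % 2 = 0 := by simp only [pe]; omega
  rw [dif_pos h2]
  congr 1
  simp only [pe, Fin.ext_iff]
  omega

lemma mkFun_po {S : Finset (Fin (2 * k))} (h : S.card = k ∧ (univ \ S).card = k)
    (τ : Perm (Fin k)) (i : Fin k) :
    mkFun S τ (po i) = (univ \ S).orderEmbOfFin h.2 (τ i) := by
  rw [mkFun, dif_pos h]
  have h2 : ¬ ((po i : Fin (2*k)) : ℕ) % 2 = 0 := by simp only [po]; omega
  rw [dif_neg h2]
  congr 2
  simp only [po, Fin.ext_iff]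
  omega

lemma mkFun_injective {S : Finset (Fin (2 * k))} (h : S.card = k ∧ (univ \ S).card = k)
    (τ : Perm (Fin k)) : Function.Injective (mkFun S τ) := by
  intro p q hpq
  obtain ⟨i, hi | hi⟩ := pe_or_po p <;> obtain ⟨j, hj | hj⟩ := pe_or_po q <;> subst hi hj
  · rw [mkFun_pe h, mkFun_pe h] at hpq
    rw [(S.orderEmbOfFin h.1).injective hpq]
  · rw [mkFun_pe h, mkFun_po h] at hpq
    have h1 := S.orderEmbOfFin_mem h.1 i
    have h2 := (univ \ S).orderEmbOfFin_mem h.2 (τ j)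
    rw [hpq] at h1
    rw [Finset.mem_sdiff] at h2
    exact absurd h1 h2.2
  · rw [mkFun_pe h, mkFun_po h] at hpq
    have h1 := S.orderEmbOfFin_mem h.1 j
    have h2 := (univ \ S).orderEmbOfFin_mem h.2 (τ i)
    rw [← hpq] at h1
    rw [Finset.mem_sdiff] at h2
    exact absurd h1 h2.2
  · rw [mkFun_po h, mkFun_po h] at hpq
    rw [τ.injective (((univ \ S).orderEmbOfFin h.2).injective hpq)]

noncomputable def mkPerm (S : Finset (Fin (2 * k))) (τ : Perm (Fin k)) : Perm (Fin (2 * k)) :=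
  Equiv.ofBijective (mkFun S τ)
    (Finite.injective_iff_bijective.mp (by
      by_cases h : S.card = k ∧ (univ \ S).card = k
      · exact mkFun_injective h τ
      · rw [mkFun, dif_neg h]; exact fun a b => id))

lemma mkPerm_pe {S : Finset (Fin (2 * k))} (h : S.card = k ∧ (univ \ S).card = k)
    (τ : Perm (Fin k)) (i : Fin k) : mkPerm S τ (pe i) = S.orderEmbOfFin h.1 i := mkFun_pe h τ i

lemma mkPerm_po {S : Finset (Fin (2 * k))} (h : S.card = k ∧ (univ \ S).card = k)
    (τ : Perm (Fin k)) (i : Fin k) :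
    mkPerm S τ (po i) = (univ \ S).orderEmbOfFin h.2 (τ i) := mkFun_po h τ i


lemma card_lt_pairs (k : ℕ) :
    (((univ : Finset (Fin k)) ×ˢ univ).filter fun p => p.1 < p.2).card = k.choose 2 := by
  rw [Finset.card_eq_sum_card_fiberwise (f := Prod.snd) (t := univ) (fun x _ => mem_univ _)]
  have key : ∀ j : Fin k, ((((univ : Finset (Fin k)) ×ˢ univ).filter fun p => p.1 < p.2).filter
      fun x => x.2 = j).card = (j : ℕ) := by
    intro j
    rw [← Fin.card_Iio (b := j)]
    refine Finset.card_nbij' (fun p => p.1) (fun i => (i, j)) ?_ ?_ ?_ ?_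
    · rintro ⟨a, b⟩ hab
      simp only [Finset.mem_coe, mem_filter, mem_product, mem_univ, true_and] at hab
      simp only [Finset.mem_coe, Finset.mem_Iio]
      obtain ⟨h1, h2⟩ := hab
      exact h2 ▸ h1
    · intro i hi
      simp only [Finset.mem_coe, Finset.mem_Iio] at hi
      simp only [Finset.mem_coe, mem_filter, mem_product, mem_univ, true_and]
      exact ⟨hi, trivial⟩
    · rintro ⟨a, b⟩ hab
      simp only [Finset.mem_coe, mem_filter, mem_product, mem_univ, true_and] at hab
      simp only [Prod.mk.injEq]
      exact ⟨trivial, hab.2.symm⟩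
    · intro i _; rfl
  rw [Finset.sum_congr rfl (fun j _ => key j)]
  rw [Fin.sum_univ_eq_sum_range (fun i => i)]
  rw [Finset.sum_range_id]
  rw [Nat.choose_two_right]



lemma key_count {k : ℕ} {S : Finset (Fin (2 * k))} (h : S.card = k ∧ (univ \ S).card = k)
    (τ : Perm (Fin k)) :
    ∃ u : ℕ, invCount (mkPerm S τ) + 2 * u =
      invCount τ + (k.choose 2 + ((S ×ˢ (univ \ S)).filter fun p => p.2 < p.1).card) := by
  classical
  set g := S.orderEmbOfFin h.1 with hg
  set f := (univ \ S).orderEmbOfFin h.2 with hf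
  have hgS : ∀ i, g i ∈ S := fun i => S.orderEmbOfFin_mem h.1 i
  have hfS : ∀ i, f i ∉ S := by
    intro i
    have := (univ \ S).orderEmbOfFin_mem h.2 i
    rw [Finset.mem_sdiff] at this
    exact this.2
  have hgf : ∀ i j, g i ≠ f j := by
    intro i j hEq
    exact hfS j (hEq ▸ hgS i)
  set σ := mkPerm S τ with hσ
  have hσpe : ∀ i, σ (pe i) = g i := fun i => mkPerm_pe h τ i
  have hσpo : ∀ i, σ (po i) = f (τ i) := fun i => mkPerm_po h τ i
  -- the four pieces
  set A := ((univ : Finset (Fin k)) ×ˢ univ).filter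
    (fun p => p.1 < p.2 ∧ τ p.2 < τ p.1) with hA
  set B := ((univ : Finset (Fin k)) ×ˢ univ).filter
    (fun p => p.1 ≤ p.2 ∧ f (τ p.2) < g p.1) with hB
  set C := ((univ : Finset (Fin k)) ×ˢ univ).filter
    (fun p => p.1 < p.2 ∧ g p.2 < f (τ p.1)) with hC
  set U := ((univ : Finset (Fin k)) ×ˢ univ).filter
    (fun p => p.2 < p.1 ∧ f (τ p.2) < g p.1) with hU
  set U' := ((univ : Finset (Fin k)) ×ˢ univ).filter
    (fun p => p.1 < p.2 ∧ f (τ p.1) < g p.2) with hU'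
  refine ⟨U.card, ?_⟩
  -- step (i): invCount σ = A.card + B.card + C.card
  have u1inj : Function.Injective (fun p : Fin k × Fin k => (po p.1, po p.2)) := by
    rintro ⟨a, b⟩ ⟨c, d⟩ hEq
    simp only [Prod.mk.injEq, po, Fin.mk.injEq] at hEq
    have : a = c := Fin.ext (by omega)
    have : b = d := Fin.ext (by omega)
    simp_all
  have u2inj : Function.Injective (fun p : Fin k × Fin k => (pe p.1, po p.2)) := by
    rintro ⟨a, b⟩ ⟨c, d⟩ hEq
    simp only [Prod.mk.injEq, pe, po, Fin.mk.injEq] at hEq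
    have : a = c := Fin.ext (by omega)
    have : b = d := Fin.ext (by omega)
    simp_all
  have u3inj : Function.Injective (fun p : Fin k × Fin k => (po p.1, pe p.2)) := by
    rintro ⟨a, b⟩ ⟨c, d⟩ hEq
    simp only [Prod.mk.injEq, pe, po, Fin.mk.injEq] at hEq
    have : a = c := Fin.ext (by omega)
    have : b = d := Fin.ext (by omega)
    simp_all
  have step1 : invCount σ = A.card + B.card + C.card := by
    have hunion : (((univ : Finset (Fin (2*k))) ×ˢ univ).filter
        fun p => p.1 < p.2 ∧ σ p.2 < σ p.1) =
        (A.image fun p => (po p.1, po p.2)) ∪ (B.image fun p => (pe p.1, po p.2))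
          ∪ (C.image fun p => (po p.1, pe p.2)) := by
      ext ⟨p, q⟩
      simp only [hA, hB, hC, Finset.mem_union, Finset.mem_image, Finset.mem_filter,
        Finset.mem_product, Finset.mem_univ, true_and, Prod.mk.injEq, Prod.exists]
      constructor
      · rintro ⟨hpq, hσ2⟩
        obtain ⟨i, hi | hi⟩ := pe_or_po p <;> obtain ⟨j, hj | hj⟩ := pe_or_po q <;> subst hi hj
        · exfalso
          rw [hσpe, hσpe] at hσ2
          rw [pe_lt_pe] at hpq
          exact absurd (g.strictMono hpq) (not_lt_of_gt hσ2)
        · left; right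
          refine ⟨i, j, ⟨pe_lt_po.mp hpq, ?_⟩, rfl, rfl⟩
          rw [hσpe, hσpo] at hσ2
          exact hσ2
        · right
          refine ⟨i, j, ⟨po_lt_pe.mp hpq, ?_⟩, rfl, rfl⟩
          rw [hσpo, hσpe] at hσ2
          exact hσ2
        · left; left
          refine ⟨i, j, ⟨po_lt_po.mp hpq, ?_⟩, rfl, rfl⟩
          rw [hσpo, hσpo] at hσ2
          exact f.strictMono.lt_iff_lt.mp hσ2
      · rintro ((⟨i, j, ⟨hij, hτ⟩, rfl, rfl⟩ | ⟨i, j, ⟨hij, hlt⟩, rfl, rfl⟩)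
          | ⟨i, j, ⟨hij, hlt⟩, rfl, rfl⟩)
        · exact ⟨po_lt_po.mpr hij, by rw [hσpo, hσpo]; exact f.strictMono hτ⟩
        · exact ⟨pe_lt_po.mpr hij, by rw [hσpe, hσpo]; exact hlt⟩
        · exact ⟨po_lt_pe.mpr hij, by rw [hσpo, hσpe]; exact hlt⟩
    have hd1 : Disjoint (A.image fun p : Fin k × Fin k => (po p.1, po p.2))
        (B.image fun p : Fin k × Fin k => (pe p.1, po p.2)) := by
      rw [Finset.disjoint_left]
      rintro ⟨p, q⟩ h1 h2
      simp only [Finset.mem_image, Prod.mk.injEq, Prod.exists] at h1 h2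
      obtain ⟨a, b, _, ha, _⟩ := h1
      obtain ⟨c, d, _, hc, _⟩ := h2
      exact pe_ne_po (hc.trans ha.symm)
    have hd2 : Disjoint ((A.image fun p : Fin k × Fin k => (po p.1, po p.2))
        ∪ (B.image fun p : Fin k × Fin k => (pe p.1, po p.2)))
        (C.image fun p : Fin k × Fin k => (po p.1, pe p.2)) := by
      rw [Finset.disjoint_left]
      rintro ⟨p, q⟩ h1 h2
      simp only [Finset.mem_union, Finset.mem_image, Prod.mk.injEq, Prod.exists] at h1 h2
      obtain ⟨c, d, _, _, hd⟩ := h2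
      rcases h1 with ⟨a, b, _, _, hb⟩ | ⟨a, b, _, _, hb⟩ <;>
        exact pe_ne_po (hd.trans hb.symm)
    rw [invCount, hunion, Finset.card_union_of_disjoint hd2,
      Finset.card_union_of_disjoint hd1,
      Finset.card_image_of_injective _ u1inj, Finset.card_image_of_injective _ u2inj,
      Finset.card_image_of_injective _ u3inj]
  -- step (v): A.card = invCount τ
  have step5 : A.card = invCount τ := rfl
  -- step (ii): B.card + U.card = invSK
  have step2 : B.card + U.card = ((S ×ˢ (univ \ S)).filter fun p => p.2 < p.1).card := by
    have hBU : B ∪ U = ((univ : Finset (Fin k)) ×ˢ univ).filter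
        (fun p => f (τ p.2) < g p.1) := by
      ext ⟨a, b⟩
      simp only [hB, hU, Finset.mem_union, Finset.mem_filter, Finset.mem_product,
        Finset.mem_univ, true_and]
      constructor
      · rintro (⟨_, hlt⟩ | ⟨_, hlt⟩) <;> exact hlt
      · intro hlt
        rcases le_or_gt a b with hab | hab
        · exact Or.inl ⟨hab, hlt⟩
        · exact Or.inr ⟨hab, hlt⟩
    have hdisj : Disjoint B U := by
      rw [Finset.disjoint_left]
      rintro ⟨a, b⟩ h1 h2
      simp only [hB, hU, Finset.mem_filter] at h1 h2
      exact absurd h2.2.1 (not_lt_of_ge h1.2.1)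
    rw [← Finset.card_union_of_disjoint hdisj, hBU]
    refine Finset.card_bij (fun p _ => (g p.1, f (τ p.2))) ?_ ?_ ?_
    · rintro ⟨a, b⟩ hab
      simp only [Finset.mem_filter, Finset.mem_product, Finset.mem_univ, true_and] at hab ⊢
      refine ⟨⟨hgS a, (univ \ S).orderEmbOfFin_mem h.2 (τ b)⟩, hab⟩
    · rintro ⟨a, b⟩ _ ⟨c, d⟩ _ hEq
      simp only [Prod.mk.injEq] at hEq
      have h1 : a = c := g.injective hEq.1
      have h2 : b = d := τ.injective (f.injective hEq.2)
      simp [h1, h2]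
    · rintro ⟨x, y⟩ hxy
      simp only [Finset.mem_filter, Finset.mem_product] at hxy
      obtain ⟨⟨hx, hy⟩, hlt⟩ := hxy
      have hxr : x ∈ Set.range g := by rw [Finset.range_orderEmbOfFin]; exact hx
      have hyr : y ∈ Set.range f := by rw [Finset.range_orderEmbOfFin]; exact hy
      obtain ⟨a, rfl⟩ := hxr
      obtain ⟨b', rfl⟩ := hyr
      obtain ⟨b, rfl⟩ := τ.surjective b'
      refine ⟨(a, b), ?_, rfl⟩
      simp only [Finset.mem_filter, Finset.mem_product, Finset.mem_univ, true_and]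
      exact hlt
  -- step (iii): C.card + U'.card = k.choose 2
  have step3 : C.card + U'.card = k.choose 2 := by
    have hCU : C ∪ U' = ((univ : Finset (Fin k)) ×ˢ univ).filter (fun p => p.1 < p.2) := by
      ext ⟨a, b⟩
      simp only [hC, hU', Finset.mem_union, Finset.mem_filter, Finset.mem_product,
        Finset.mem_univ, true_and]
      constructor
      · rintro (⟨hab, _⟩ | ⟨hab, _⟩) <;> exact hab
      · intro hab
        rcases lt_or_gt_of_ne (Ne.symm (hgf b (τ a))) with hlt | hlt
        · exact Or.inr ⟨hab, hlt⟩
        · exact Or.inl ⟨hab, hlt⟩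
    have hdisj : Disjoint C U' := by
      rw [Finset.disjoint_left]
      rintro ⟨a, b⟩ h1 h2
      simp only [hC, hU', Finset.mem_filter] at h1 h2
      exact absurd h2.2.2 (not_lt_of_gt h1.2.2)
    rw [← Finset.card_union_of_disjoint hdisj, hCU, card_lt_pairs]
  -- step (iv): U.card = U'.card
  have step4 : U.card = U'.card := by
    refine Finset.card_nbij' (fun p => (p.2, p.1)) (fun p => (p.2, p.1)) ?_ ?_ ?_ ?_
    · rintro ⟨a, b⟩ hab
      simp only [hU, hU', Finset.mem_coe, Finset.mem_filter, Finset.mem_product, Finset.mem_univ,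
        true_and] at hab ⊢
      exact hab
    · rintro ⟨a, b⟩ hab
      simp only [hU, hU', Finset.mem_coe, Finset.mem_filter, Finset.mem_product, Finset.mem_univ,
        true_and] at hab ⊢
      exact hab
    · rintro ⟨a, b⟩ _; rfl
    · rintro ⟨a, b⟩ _; rfl
  omega

lemma sign_mkPerm {k : ℕ} {S : Finset (Fin (2 * k))} (h : S.card = k ∧ (univ \ S).card = k)
    (τ : Perm (Fin k)) :
    (Perm.sign (mkPerm S τ) : ℤˣ) =
      (-1) ^ (k.choose 2 + ((S ×ˢ (univ \ S)).filter fun p => p.2 < p.1).card) * Perm.sign τ := by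
  obtain ⟨u, hu⟩ := key_count h τ
  rw [sign_eq_pow_invCount, sign_eq_pow_invCount τ]
  have : ((-1 : ℤˣ)) ^ invCount (mkPerm S τ) = (-1) ^ (invCount (mkPerm S τ) + 2 * u) := by
    rw [pow_add, pow_mul]
    norm_num
  rw [this, hu, pow_add, mul_comm]
theorem core {R : Type*} [CommRing R] (k : ℕ) (Z : Matrix (Fin (2*k)) (Fin (2*k)) R) :
    (∑ S ∈ (univ : Finset (Fin (2*k))).powerset,
        if h : S.card = k ∧ (univ \ S).card = k then
          (-1 : R)^(Nat.choose k 2 + ((S ×ˢ (univ \ S)).filter fun p => p.2 < p.1).card) *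
            ((Matrix.of fun a b : Fin (2*k) => if a < b then Z a b else 0).submatrix
              (S.orderEmbOfFin h.1) ((univ \ S).orderEmbOfFin h.2)).det
        else 0)
      = pfaffian Z := by
  classical
  have det_col : ∀ M : Matrix (Fin k) (Fin k) R,
      M.det = ∑ τ : Perm (Fin k), ((Perm.sign τ : ℤ) : R) * ∏ i, M i (τ i) := by
    intro M
    rw [← Matrix.det_transpose M, Matrix.det_apply']
    simp only [Matrix.transpose_apply]
  set G : Finset (Fin (2*k)) × Perm (Fin k) → R := fun p =>
    if h : p.1.card = k ∧ (univ \ p.1).card = k then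
      (-1 : R)^(Nat.choose k 2 + ((p.1 ×ˢ (univ \ p.1)).filter fun q => q.2 < q.1).card) *
        (((Perm.sign p.2 : ℤ) : R) *
          ∏ i, ((Matrix.of fun a b : Fin (2*k) => if a < b then Z a b else 0).submatrix
            (p.1.orderEmbOfFin h.1) ((univ \ p.1).orderEmbOfFin h.2)) i (p.2 i))
    else 0 with hG
  have hLHS : (∑ S ∈ (univ : Finset (Fin (2*k))).powerset,
      if h : S.card = k ∧ (univ \ S).card = k then
        (-1 : R)^(Nat.choose k 2 + ((S ×ˢ (univ \ S)).filter fun p => p.2 < p.1).card) *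
          ((Matrix.of fun a b : Fin (2*k) => if a < b then Z a b else 0).submatrix
            (S.orderEmbOfFin h.1) ((univ \ S).orderEmbOfFin h.2)).det
      else 0)
      = ∑ p ∈ (univ : Finset (Fin (2*k))).powerset ×ˢ (univ : Finset (Perm (Fin k))), G p := by
    rw [Finset.sum_product]
    refine Finset.sum_congr rfl ?_
    intro S _
    by_cases h : S.card = k ∧ (univ \ S).card = k
    · rw [dif_pos h, det_col, Finset.mul_sum]
      refine Finset.sum_congr rfl ?_
      intro τ _
      rw [hG]
      simp only
      rw [dif_pos h]
    · rw [dif_neg h]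
      rw [hG]
      simp only
      rw [Finset.sum_congr rfl (fun τ _ => dif_neg h), Finset.sum_const_zero]
  rw [hLHS, pfaffian]
  -- helper : nonzero term gives conditions
  have hGne : ∀ p : Finset (Fin (2*k)) × Perm (Fin k), G p ≠ 0 →
      ∃ h : p.1.card = k ∧ (univ \ p.1).card = k,
        ∀ i, p.1.orderEmbOfFin h.1 i < (univ \ p.1).orderEmbOfFin h.2 (p.2 i) := by
    rintro ⟨S, τ⟩ hne
    by_cases h : S.card = k ∧ (univ \ S).card = k
    · refine ⟨h, ?_⟩
      by_contra hc
      push_neg at hc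
      obtain ⟨i, hi⟩ := hc
      apply hne
      rw [hG]
      simp only
      rw [dif_pos h]
      have : (∏ j, ((Matrix.of fun a b : Fin (2*k) => if a < b then Z a b else 0).submatrix
          (S.orderEmbOfFin h.1) ((univ \ S).orderEmbOfFin h.2)) j (τ j)) = 0 := by
        refine Finset.prod_eq_zero (Finset.mem_univ i) ?_
        simp only [Matrix.submatrix_apply, Matrix.of_apply]
        rw [if_neg (not_lt_of_ge hi)]
      rw [this, mul_zero, mul_zero]
    · apply absurd _ hne
      rw [hG]; simp only; rw [dif_neg h]
  -- term equality
  have term_eq : ∀ (S : Finset (Fin (2*k))) (τ : Perm (Fin k))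
      (h : S.card = k ∧ (univ \ S).card = k)
      (hlt : ∀ i, S.orderEmbOfFin h.1 i < (univ \ S).orderEmbOfFin h.2 (τ i)),
      G (S, τ) = ((Perm.sign (mkPerm S τ) : ℤ) : R) *
        ∏ i : Fin k, Z (mkPerm S τ (pe i)) (mkPerm S τ (po i)) := by
    intro S τ h hlt
    have hsign : ((Perm.sign (mkPerm S τ) : ℤ) : R) =
        (-1 : R)^(Nat.choose k 2 + ((S ×ˢ (univ \ S)).filter fun q => q.2 < q.1).card) *
          ((Perm.sign τ : ℤ) : R) := by
      have := sign_mkPerm h τ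
      have h2 : (Perm.sign (mkPerm S τ) : ℤ) =
          (-1 : ℤ)^(Nat.choose k 2 + ((S ×ˢ (univ \ S)).filter fun q => q.2 < q.1).card) *
            (Perm.sign τ : ℤ) := by
        rw [this]
        simp [Units.val_mul, Units.val_pow_eq_pow_val]
      rw [h2]
      push_cast
      ring
    rw [hG]
    simp only
    rw [dif_pos h, hsign]
    have hprod : (∏ i, ((Matrix.of fun a b : Fin (2*k) => if a < b then Z a b else 0).submatrix
        (S.orderEmbOfFin h.1) ((univ \ S).orderEmbOfFin h.2)) i (τ i)) =
        ∏ i : Fin k, Z (mkPerm S τ (pe i)) (mkPerm S τ (po i)) := by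
      refine Finset.prod_congr rfl ?_
      intro i _
      rw [mkPerm_pe h, mkPerm_po h]
      simp only [Matrix.submatrix_apply, Matrix.of_apply]
      rw [if_pos (hlt i)]
    rw [hprod]
    ring
  -- the bijection
  refine Finset.sum_bij_ne_zero (fun p _ _ => mkPerm p.1 p.2) ?_ ?_ ?_ ?_
  · -- maps into the filter
    rintro ⟨S, τ⟩ _ hne
    obtain ⟨h, hlt⟩ := hGne (S, τ) hne
    rw [Finset.mem_filter]
    refine ⟨Finset.mem_univ _, ?_, ?_⟩
    · intro i
      have h1 : mkPerm S τ (pe i) = S.orderEmbOfFin h.1 i := mkPerm_pe h τ i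
      have h2 : mkPerm S τ (po i) = (univ \ S).orderEmbOfFin h.2 (τ i) := mkPerm_po h τ i
      exact h1 ▸ h2 ▸ hlt i
    · intro i j hij
      have h1 : mkPerm S τ (pe i) = S.orderEmbOfFin h.1 i := mkPerm_pe h τ i
      have h2 : mkPerm S τ (pe j) = S.orderEmbOfFin h.1 j := mkPerm_pe h τ j
      exact h1 ▸ h2 ▸ (S.orderEmbOfFin h.1).strictMono hij
  · -- injectivity
    rintro ⟨S, τ⟩ _ hne ⟨S', τ'⟩ _ hne' hEq0
    have hEq : mkPerm S τ = mkPerm S' τ' := hEq0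
    obtain ⟨h, hlt⟩ := hGne (S, τ) hne
    obtain ⟨h', hlt'⟩ := hGne (S', τ') hne'
    have himg : ∀ (T : Finset (Fin (2*k))) (hT : T.card = k ∧ (univ \ T).card = k)
        (ρ : Perm (Fin k)), T = Finset.image (fun i => mkPerm T ρ (pe i)) univ := by
      intro T hT ρ
      refine (Finset.eq_of_subset_of_card_le ?_ ?_).symm
      · intro x hx
        rw [Finset.mem_image] at hx
        obtain ⟨i, _, rfl⟩ := hx
        rw [mkPerm_pe hT]
        exact T.orderEmbOfFin_mem hT.1 i
      · rw [Finset.card_image_of_injective _ (fun a b hab => by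
          have := congrArg (mkPerm T ρ) (?_ : pe a = pe b)
          · exact Fin.ext (by
              have : (pe a : Fin (2*k)) = pe b := (mkPerm T ρ).injective hab
              simpa [pe, Fin.ext_iff] using this)
          · exact (mkPerm T ρ).injective hab), Finset.card_univ, Fintype.card_fin, hT.1]
    have hSS : S = S' := by
      rw [himg S h τ, himg S' h' τ', hEq]
    subst hSS
    have hττ : τ = τ' := by
      refine Equiv.ext fun i => ?_
      have h1 : mkPerm S τ (po i) = (univ \ S).orderEmbOfFin h.2 (τ i) := mkPerm_po h τ i
      have h2 : mkPerm S τ' (po i) = (univ \ S).orderEmbOfFin h'.2 (τ' i) := mkPerm_po h' τ' i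
      have h3 : (univ \ S).orderEmbOfFin h.2 (τ i) = (univ \ S).orderEmbOfFin h.2 (τ' i) := by
        rw [← h1, hEq, h2]
      exact ((univ \ S).orderEmbOfFin h.2).injective h3
    rw [hττ]
  · -- surjectivity
    intro σ hσ hσne
    rw [Finset.mem_filter] at hσ
    obtain ⟨-, hσ1, hσ2⟩ := hσ
    set m : Fin k → Fin (2*k) := fun i => σ (pe i) with hm
    have hmono : StrictMono m := fun a b hab => hσ2 a b hab
    set S : Finset (Fin (2*k)) := Finset.image m univ with hS
    have hScard : S.card = k := by
      rw [hS, Finset.card_image_of_injective _ hmono.injective, Finset.card_univ,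
        Fintype.card_fin]
    have hSccard : (univ \ S).card = k := by
      rw [Finset.card_sdiff_of_subset (Finset.subset_univ S), Finset.card_univ, Fintype.card_fin, hScard]
      omega
    have h : S.card = k ∧ (univ \ S).card = k := ⟨hScard, hSccard⟩
    have hgm : m = S.orderEmbOfFin hScard :=
      Finset.orderEmbOfFin_unique hScard
        (fun i => Finset.mem_image_of_mem m (Finset.mem_univ i)) hmono
    have hpomem : ∀ i, σ (po i) ∈ univ \ S := by
      intro i
      rw [Finset.mem_sdiff]
      refine ⟨Finset.mem_univ _, ?_⟩
      intro hmem
      rw [hS, Finset.mem_image] at hmem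
      obtain ⟨j, _, hj⟩ := hmem
      exact pe_ne_po (σ.injective hj)
    set t : Fin k → Fin k :=
      fun i => ((univ \ S).orderIsoOfFin hSccard).symm ⟨σ (po i), hpomem i⟩ with ht
    have htinj : Function.Injective t := by
      intro a b hab
      rw [ht] at hab
      have := congrArg ((univ \ S).orderIsoOfFin hSccard) hab
      simp only [OrderIso.apply_symm_apply] at this
      have h2 : σ (po a) = σ (po b) := congrArg Subtype.val this
      have h3 := σ.injective h2
      simpa [po, Fin.ext_iff] using h3
    set τ : Perm (Fin k) := Equiv.ofBijective t (Finite.injective_iff_bijective.mp htinj)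
      with hτ
    have hfτ : ∀ i, (univ \ S).orderEmbOfFin hSccard (τ i) = σ (po i) := by
      intro i
      have : τ i = t i := rfl
      rw [this, ht]
      have := Finset.coe_orderIsoOfFin_apply (univ \ S) hSccard
        (((univ \ S).orderIsoOfFin hSccard).symm ⟨σ (po i), hpomem i⟩)
      rw [← this, OrderIso.apply_symm_apply]
    have hmk : mkPerm S τ = σ := by
      refine Equiv.ext fun p => ?_
      obtain ⟨i, rfl | rfl⟩ := pe_or_po p
      · rw [mkPerm_pe h]
        rw [← hgm]
      · rw [mkPerm_po h]
        exact hfτ i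
    have hlt : ∀ i, S.orderEmbOfFin h.1 i < (univ \ S).orderEmbOfFin h.2 (τ i) := by
      intro i
      rw [hfτ i, ← hgm]
      exact hσ1 i
    refine ⟨(S, τ), Finset.mem_product.mpr ⟨Finset.mem_powerset.mpr (Finset.subset_univ S),
      Finset.mem_univ τ⟩, ?_, hmk⟩
    · rw [term_eq S τ h hlt, hmk]
      exact hσne
  · -- value equality
    rintro ⟨S, τ⟩ _ hne
    obtain ⟨h, hlt⟩ := hGne (S, τ) hne
    exact term_eq S τ h hlt

end PfAux

/-- Lemma: let `I ⊆ [n]` with `|I| = m = 2k`, `Y` a skew-symmetric `n × n` matrix and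
`X` the upper triangular matrix with `X_{i,j} = Y_{i,j}` for `i < j` and `X_{i,j} = 0`
otherwise. Then `Σ_{J∪K=I, J∩K=∅, |J|=|K|=k} (−1)^{binom(k,2)+inv(JK)} det(X_{J,K})
= Pf(Y_{I,I})`, where `inv(JK)` is the number of pairs `(j,κ) ∈ J×K` with `j > κ`.
(The pairs `(J,K)` are parametrised by the subsets `J ⊆ I`, with `K = I \ J`.) -/
theorem sum_det_upper_eq_pf {R : Type*} [CommRing R] (k n : ℕ) (hk : 0 < k)
    (I : Finset (Fin n)) (hI : I.card = 2*k)
    (Y : Matrix (Fin n) (Fin n) R) (hY : Yᵀ = -Y) (hdiag : ∀ i, Y i i = 0) :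
    (∑ J ∈ I.powerset,
        if h : J.card = k ∧ (I \ J).card = k then
          (-1 : R)^(Nat.choose k 2 + ((J ×ˢ (I \ J)).filter fun p => p.2 < p.1).card) *
            ((Matrix.of fun a b : Fin n => if a < b then Y a b else 0).submatrix
              (J.orderEmbOfFin h.1) ((I \ J).orderEmbOfFin h.2)).det
        else 0)
      = pfaffian (Y.submatrix (I.orderEmbOfFin hI) (I.orderEmbOfFin hI)) := by
  classical
  set e : Fin (2*k) ↪o Fin n := I.orderEmbOfFin hI with he
  set Z : Matrix (Fin (2*k)) (Fin (2*k)) R := Y.submatrix e e with hZ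
  rw [← PfAux.core k Z]
  have hIe : (Finset.univ : Finset (Fin (2*k))).map e.toEmbedding = I := by
    refine Finset.eq_of_subset_of_card_le ?_ ?_
    · intro x hx
      rw [Finset.mem_map] at hx
      obtain ⟨y, _, rfl⟩ := hx
      exact I.orderEmbOfFin_mem hI y
    · rw [Finset.card_map, Finset.card_univ, Fintype.card_fin, hI]
  refine (Finset.sum_nbij' (fun S => S.map e.toEmbedding)
    (fun J => J.preimage e (e.injective.injOn)) ?_ ?_ ?_ ?_ ?_).symm
  · -- maps into I.powerset
    intro S _
    rw [Finset.mem_powerset, ← hIe]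
    exact Finset.map_subset_map.mpr (Finset.subset_univ S)
  · -- preimage into univ.powerset
    intro J _
    exact Finset.mem_powerset.mpr (Finset.subset_univ _)
  · -- left inverseies
    intro S _
    ext x
    rw [Finset.mem_preimage, Finset.mem_map]
    constructor
    · rintro ⟨y, hy, hxy⟩
      rwa [← e.injective hxy]
    · intro hx
      exact ⟨x, hx, rfl⟩
  · -- right inverse
    intro J hJ
    rw [Finset.mem_powerset] at hJ
    ext x
    rw [Finset.mem_map]
    constructor
    · rintro ⟨y, hy, rfl⟩
      rwa [Finset.mem_preimage] at hy
    · intro hx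
      have hxI : x ∈ I := hJ hx
      rw [← hIe, Finset.mem_map] at hxI
      obtain ⟨y, _, rfl⟩ := hxI
      exact ⟨y, Finset.mem_preimage.mpr hx, rfl⟩
  · -- term equality
    intro S _
    set J : Finset (Fin n) := S.map e.toEmbedding with hJdef
    have hsdiff : I \ J = (Finset.univ \ S).map e.toEmbedding := by
      rw [← hIe, hJdef]
      ext x
      simp only [Finset.mem_sdiff, Finset.mem_map]
      constructor
      · rintro ⟨⟨y, _, rfl⟩, hnx⟩
        exact ⟨y, ⟨Finset.mem_univ y, fun hyS => hnx ⟨y, hyS, rfl⟩⟩, rfl⟩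
      · rintro ⟨y, hy, rfl⟩
        refine ⟨⟨y, Finset.mem_univ y, rfl⟩, fun hc => ?_⟩
        obtain ⟨z, hz, hze⟩ := hc
        rw [e.injective hze] at hz
        exact hy.2 hz
    have hcards : (J.card = k ∧ (I \ J).card = k) ↔
        (S.card = k ∧ (Finset.univ \ S).card = k) := by
      rw [hJdef, hsdiff, Finset.card_map, Finset.card_map]
    by_cases h : S.card = k ∧ (Finset.univ \ S).card = k
    · have hJ : J.card = k ∧ (I \ J).card = k := hcards.mpr h
      rw [dif_pos h, dif_pos hJ]
      have hgemb : ⇑(J.orderEmbOfFin hJ.1) = fun i => e (S.orderEmbOfFin h.1 i) := by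
        refine (Finset.orderEmbOfFin_unique hJ.1 ?_ ?_).symm
        · intro x
          rw [hJdef, Finset.mem_map]
          exact ⟨S.orderEmbOfFin h.1 x, S.orderEmbOfFin_mem h.1 x, rfl⟩
        · exact e.strictMono.comp (S.orderEmbOfFin h.1).strictMono
      have hfemb : ⇑((I \ J).orderEmbOfFin hJ.2) =
          fun i => e ((Finset.univ \ S).orderEmbOfFin h.2 i) := by
        refine (Finset.orderEmbOfFin_unique hJ.2 ?_ ?_).symm
        · intro x
          rw [hsdiff, Finset.mem_map]
          exact ⟨(Finset.univ \ S).orderEmbOfFin h.2 x,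
            (Finset.univ \ S).orderEmbOfFin_mem h.2 x, rfl⟩
        · exact e.strictMono.comp ((Finset.univ \ S).orderEmbOfFin h.2).strictMono
      have hinv : ((J ×ˢ (I \ J)).filter fun p => p.2 < p.1).card =
          ((S ×ˢ (Finset.univ \ S)).filter fun p => p.2 < p.1).card := by
        refine (Finset.card_bij (fun p _ => (e p.1, e p.2)) ?_ ?_ ?_).symm
        · rintro ⟨a, b⟩ hab
          simp only [Finset.mem_filter, Finset.mem_product] at hab ⊢
          obtain ⟨⟨ha, hb⟩, hlt⟩ := hab
          refine ⟨⟨?_, ?_⟩, e.strictMono hlt⟩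
          · rw [hJdef, Finset.mem_map]; exact ⟨a, ha, rfl⟩
          · rw [hsdiff, Finset.mem_map]; exact ⟨b, hb, rfl⟩
        · rintro ⟨a, b⟩ _ ⟨c, d⟩ _ hEq
          simp only [Prod.mk.injEq] at hEq
          rw [Prod.mk.injEq]
          exact ⟨e.injective hEq.1, e.injective hEq.2⟩
        · rintro ⟨x, y⟩ hxy
          simp only [Finset.mem_filter, Finset.mem_product] at hxy
          obtain ⟨⟨hx, hy⟩, hlt⟩ := hxy
          rw [hJdef, Finset.mem_map] at hx
          rw [hsdiff, Finset.mem_map] at hy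
          obtain ⟨a, ha, rfl⟩ := hx
          obtain ⟨b, hb, rfl⟩ := hy
          refine ⟨(a, b), ?_, rfl⟩
          simp only [Finset.mem_filter, Finset.mem_product]
          exact ⟨⟨ha, hb⟩, e.lt_iff_lt.mp hlt⟩
      have hmat : ((Matrix.of fun a b : Fin n => if a < b then Y a b else 0).submatrix
            (J.orderEmbOfFin hJ.1) ((I \ J).orderEmbOfFin hJ.2)) =
          ((Matrix.of fun a b : Fin (2*k) => if a < b then Z a b else 0).submatrix
            (S.orderEmbOfFin h.1) ((Finset.univ \ S).orderEmbOfFin h.2)) := by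
        ext i j
        simp only [Matrix.submatrix_apply, Matrix.of_apply, hgemb, hfemb, e.lt_iff_lt]
        rfl
      rw [hinv, hmat]
    · rw [dif_neg h, dif_neg (fun hc => h (hcards.mp hc))]
end

section
/- Let n and ℓ be positive integers, and let X be an n×n matrix over a commutative ring with X_{i,j} = 1 for 1 ≤ i < j ≤ n and X_{i,j} = 0 for i > j (arbitrary diagonal entries). Let I = {i_1 < i_2 < … < i_ℓ} and J = {j_1 < j_2 < … < j_ℓ} be subsets of [n]. Then det(X_{I,J}) = ∏_{k=1}^{ℓ} X_{i_k,i_k}^{χ(i_k = j_k)} · (1 − X_{i_k,i_k})^{χ(j_{k−1} = i_k)} if 1 ≤ i_1 ≤ j_1 ≤ i_2 ≤ j_2 ≤ … ≤ i_ℓ ≤ j_ℓ ≤ n, and det(X_{I,J}) = 0 otherwise, where by convention j_0 = 0. -/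
open Matrix

lemma det_row_last' {R : Type*} [CommRing R] {m : ℕ} (A : Matrix (Fin (m+1)) (Fin (m+1)) R)
    (h : ∀ t, t ≠ Fin.last m → A (Fin.last m) t = 0) :
    A.det = A (Fin.last m) (Fin.last m) * (A.submatrix Fin.castSucc Fin.castSucc).det := by
  rw [Matrix.det_succ_row A (Fin.last m), Finset.sum_eq_single (Fin.last m)]
  · rw [Fin.succAbove_last]
    have he : (-1 : R) ^ (((Fin.last m : Fin (m+1)) : ℕ) + ((Fin.last m : Fin (m+1)) : ℕ)) = 1 :=
      Even.neg_one_pow ⟨_, rfl⟩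
    rw [he, one_mul]
  · intro b _ hb; rw [h b hb]; ring
  · intro habs; exact absurd (Finset.mem_univ _) habs

lemma det_col_last' {R : Type*} [CommRing R] {m : ℕ} (A : Matrix (Fin (m+1)) (Fin (m+1)) R)
    (h : ∀ s, s ≠ Fin.last m → A s (Fin.last m) = 0) :
    A.det = A (Fin.last m) (Fin.last m) * (A.submatrix Fin.castSucc Fin.castSucc).det := by
  rw [← Matrix.det_transpose A, det_row_last' Aᵀ (fun t ht => h t ht),
    ← Matrix.transpose_submatrix, Matrix.det_transpose]
  rfl

theorem det_submatrix_aux {R : Type*} [CommRing R] {n : ℕ} (X : Matrix (Fin n) (Fin n) R)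
    (hXu : ∀ i j : Fin n, i < j → X i j = 1) (hXl : ∀ i j : Fin n, j < i → X i j = 0) :
    ∀ ℓ : ℕ, ∀ fI fJ : Fin (ℓ+1) → Fin n, StrictMono fI → StrictMono fJ →
    (X.submatrix fI fJ).det =
      if (∀ t : Fin (ℓ+1), fI t ≤ fJ t) ∧
          (∀ s t : Fin (ℓ+1), (s:ℕ) + 1 = (t:ℕ) → fJ s ≤ fI t) then
        ∏ t : Fin (ℓ+1),
          (if fI t = fJ t then X (fI t) (fI t) else 1) *
            (if h0 : (t:ℕ) = 0 then 1
             else if fJ ⟨(t:ℕ) - 1, by have := t.isLt; omega⟩ = fI t then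
               1 - X (fI t) (fI t)
             else 1)
      else 0 := by
  intro ℓ
  induction ℓ with
  | zero =>
    intro fI fJ hfI hfJ
    rw [Matrix.det_fin_one, Matrix.submatrix_apply]
    have h2 : ∀ s t : Fin 1, (s:ℕ) + 1 = (t:ℕ) → fJ s ≤ fI t := by
      intro s t h
      have hs := s.isLt; have ht := t.isLt
      omega
    have hall : ∀ t : Fin 1, t = 0 := fun t => Fin.ext (by omega)
    rcases lt_trichotomy (fI 0) (fJ 0) with h | h | h
    · rw [hXu _ _ h, if_pos ⟨fun t => (hall t) ▸ h.le, h2⟩, Fin.prod_univ_one]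
      simp [h.ne]
    · rw [if_pos ⟨fun t => (hall t) ▸ h.le, h2⟩, Fin.prod_univ_one, if_pos h, h]
      simp
    · rw [hXl _ _ h, if_neg]
      rintro ⟨h1, -⟩
      exact absurd (h1 0) (not_le.mpr h)
  | succ ℓ IH =>
    intro fI fJ hfI hfJ
    have hfI' : StrictMono (fI ∘ Fin.castSucc) := hfI.comp Fin.strictMono_castSucc
    have hfJ' : StrictMono (fJ ∘ Fin.castSucc) := hfJ.comp Fin.strictMono_castSucc
    have hPL : Fin.castSucc (Fin.last ℓ) < Fin.last (ℓ+1) := Fin.castSucc_lt_last _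
    have hJP : ∀ t : Fin (ℓ+2), t ≠ Fin.last (ℓ+1) → fJ t ≤ fJ (Fin.castSucc (Fin.last ℓ)) := by
      intro t ht
      refine hfJ.monotone ?_
      rw [Fin.le_def]
      simp only [Fin.coe_castSucc, Fin.val_last]
      have h1 := t.isLt
      have h2 : (t:ℕ) ≠ ℓ+1 := fun h => ht (Fin.ext (by simpa using h))
      omega
    have hIle : ∀ s : Fin (ℓ+2), s ≠ Fin.last (ℓ+1) → fI s < fI (Fin.last (ℓ+1)) :=
      fun s hs => hfI (Fin.lt_last_iff_ne_last.mpr hs)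
    have hcond : ((∀ t : Fin (ℓ+2), fI t ≤ fJ t) ∧
          (∀ s t : Fin (ℓ+2), (s:ℕ) + 1 = (t:ℕ) → fJ s ≤ fI t)) ↔
        (((∀ t : Fin (ℓ+1), (fI ∘ Fin.castSucc) t ≤ (fJ ∘ Fin.castSucc) t) ∧
          (∀ s t : Fin (ℓ+1), (s:ℕ) + 1 = (t:ℕ) → (fJ ∘ Fin.castSucc) s ≤ (fI ∘ Fin.castSucc) t)) ∧
          fI (Fin.last (ℓ+1)) ≤ fJ (Fin.last (ℓ+1)) ∧
          fJ (Fin.castSucc (Fin.last ℓ)) ≤ fI (Fin.last (ℓ+1))) := by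
      constructor
      · rintro ⟨h1, h2⟩
        exact ⟨⟨fun t => h1 _, fun s t hst => h2 _ _ (by simpa using hst)⟩, h1 _,
          h2 _ _ (by simp)⟩
      · rintro ⟨⟨h1, h2⟩, h3, h4⟩
        constructor
        · intro t
          rcases Fin.eq_castSucc_or_eq_last t with ⟨t', rfl⟩ | rfl
          · exact h1 t'
          · exact h3
        · intro s t hst
          rcases Fin.eq_castSucc_or_eq_last t with ⟨t', rfl⟩ | rfl
          · have hs : (s:ℕ) < ℓ+1 := by
              have := t'.isLt; simp only [Fin.coe_castSucc] at hst; omega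
            have hcs : Fin.castSucc (⟨(s:ℕ), hs⟩ : Fin (ℓ+1)) = s := Fin.ext rfl
            have := h2 ⟨(s:ℕ), hs⟩ t' (by simpa using hst)
            simpa [hcs] using this
          · have hs : s = Fin.castSucc (Fin.last ℓ) := by
              apply Fin.ext
              simp only [Fin.val_last] at hst
              simp only [Fin.coe_castSucc, Fin.val_last]
              omega
            rw [hs]; exact h4
    have hfinish : ∀ c : R,
        (X.submatrix fI fJ).det =
          c * (X.submatrix (fI ∘ Fin.castSucc) (fJ ∘ Fin.castSucc)).det →
        fI (Fin.last (ℓ+1)) ≤ fJ (Fin.last (ℓ+1)) →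
        fJ (Fin.castSucc (Fin.last ℓ)) ≤ fI (Fin.last (ℓ+1)) →
        c = (if fI (Fin.last (ℓ+1)) = fJ (Fin.last (ℓ+1)) then
              X (fI (Fin.last (ℓ+1))) (fI (Fin.last (ℓ+1))) else 1) *
            (if fJ (Fin.castSucc (Fin.last ℓ)) = fI (Fin.last (ℓ+1)) then
              1 - X (fI (Fin.last (ℓ+1))) (fI (Fin.last (ℓ+1))) else 1) →
        (X.submatrix fI fJ).det =
          (if (∀ t : Fin (ℓ+2), fI t ≤ fJ t) ∧
              (∀ s t : Fin (ℓ+2), (s:ℕ) + 1 = (t:ℕ) → fJ s ≤ fI t) then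
            ∏ t : Fin (ℓ+2),
              (if fI t = fJ t then X (fI t) (fI t) else 1) *
                (if h0 : (t:ℕ) = 0 then 1
                 else if fJ ⟨(t:ℕ) - 1, by have := t.isLt; omega⟩ = fI t then
                   1 - X (fI t) (fI t)
                 else 1)
          else 0) := by
      intro c hdet h3 h4 hc
      rw [hdet, IH _ _ hfI' hfJ']
      by_cases hC : (∀ t : Fin (ℓ+1), (fI ∘ Fin.castSucc) t ≤ (fJ ∘ Fin.castSucc) t) ∧
          (∀ s t : Fin (ℓ+1), (s:ℕ) + 1 = (t:ℕ) → (fJ ∘ Fin.castSucc) s ≤ (fI ∘ Fin.castSucc) t)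
      · rw [if_pos hC, if_pos (hcond.mpr ⟨hC, h3, h4⟩)]
        conv_rhs => rw [Fin.prod_univ_castSucc]
        have hP : (⟨ℓ, by omega⟩ : Fin (ℓ+2)) = Fin.castSucc (Fin.last ℓ) := rfl
        simp only [Fin.val_last, Nat.add_sub_cancel, hP]
        rw [dif_neg (Nat.succ_ne_zero ℓ), ← hc, mul_comm]
        rfl
      · rw [if_neg hC, if_neg (fun h => hC (hcond.mp h).1), mul_zero]
    rcases lt_trichotomy (fJ (Fin.castSucc (Fin.last ℓ))) (fI (Fin.last (ℓ+1))) with hPlt | hPE | hbad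
    · -- fJ P < fI L
      rcases lt_trichotomy (fI (Fin.last (ℓ+1))) (fJ (Fin.last (ℓ+1))) with hlt | heq | hgt
      · -- simple case: A L L = 1
        have hrow : ∀ t, t ≠ Fin.last (ℓ+1) → (X.submatrix fI fJ) (Fin.last (ℓ+1)) t = 0 :=
          fun t ht => hXl _ _ (lt_of_le_of_lt (hJP t ht) hPlt)
        have hdet := det_row_last' (X.submatrix fI fJ) hrow
        rw [Matrix.submatrix_submatrix, Matrix.submatrix_apply, hXu _ _ hlt] at hdet
        exact hfinish 1 hdet hlt.le hPlt.le
          (by rw [if_neg hlt.ne, if_neg hPlt.ne]; ring)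
      · -- diagonal case
        have hrow : ∀ t, t ≠ Fin.last (ℓ+1) → (X.submatrix fI fJ) (Fin.last (ℓ+1)) t = 0 :=
          fun t ht => hXl _ _ (lt_of_le_of_lt (hJP t ht) hPlt)
        have hdet := det_row_last' (X.submatrix fI fJ) hrow
        rw [Matrix.submatrix_submatrix, Matrix.submatrix_apply, ← heq] at hdet
        exact hfinish _ hdet heq.le hPlt.le
          (by rw [if_pos heq, if_neg hPlt.ne]; ring)
      · -- fJ L < fI L : last row is zero
        have hrow : ∀ t, (X.submatrix fI fJ) (Fin.last (ℓ+1)) t = 0 :=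
          fun t => hXl _ _ (lt_of_le_of_lt (hfJ.monotone (Fin.le_last t)) hgt)
        rw [Matrix.det_eq_zero_of_row_eq_zero _ hrow, if_neg]
        rintro ⟨h1, -⟩
        exact absurd (h1 (Fin.last (ℓ+1))) (not_le.mpr hgt)
    · -- fJ P = fI L : column operation case
      have hlt : fI (Fin.last (ℓ+1)) < fJ (Fin.last (ℓ+1)) := hPE ▸ hfJ hPL
      set A := X.submatrix fI fJ with hA
      have hdB := Matrix.det_updateCol_add_smul_self A
        (Fin.ne_of_gt hPL : Fin.last (ℓ+1) ≠ Fin.castSucc (Fin.last ℓ)) (-1 : R)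
      set B := A.updateCol (Fin.last (ℓ+1))
        (fun k => A k (Fin.last (ℓ+1)) + (-1 : R) • A k (Fin.castSucc (Fin.last ℓ))) with hB
      have hcol : ∀ s, s ≠ Fin.last (ℓ+1) → B s (Fin.last (ℓ+1)) = 0 := by
        intro s hs
        have h1 : fI s < fJ (Fin.castSucc (Fin.last ℓ)) := hPE ▸ hIle s hs
        rw [hB, Matrix.updateCol_self]
        simp only [hA, Matrix.submatrix_apply, smul_eq_mul]
        rw [hXu _ _ (lt_trans h1 (hfJ hPL)), hXu _ _ h1]
        ring
      have hdet2 := det_col_last' B hcol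
      have hBLL : B (Fin.last (ℓ+1)) (Fin.last (ℓ+1))
          = 1 - X (fI (Fin.last (ℓ+1))) (fI (Fin.last (ℓ+1))) := by
        rw [hB, Matrix.updateCol_self]
        simp only [hA, Matrix.submatrix_apply, smul_eq_mul]
        rw [hXu _ _ hlt, hPE]
        ring
      have hBsub : B.submatrix Fin.castSucc Fin.castSucc
          = X.submatrix (fI ∘ Fin.castSucc) (fJ ∘ Fin.castSucc) := by
        ext s t
        rw [Matrix.submatrix_apply, hB,
          Matrix.updateCol_ne (Fin.castSucc_lt_last t).ne]
        rfl
      have hdet : (X.submatrix fI fJ).det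
          = (1 - X (fI (Fin.last (ℓ+1))) (fI (Fin.last (ℓ+1)))) *
            (X.submatrix (fI ∘ Fin.castSucc) (fJ ∘ Fin.castSucc)).det := by
        rw [← hdB, hdet2, hBLL, hBsub]
      exact hfinish _ hdet hlt.le hPE.le
        (by rw [if_neg hlt.ne, if_pos hPE]; ring)
    · -- fI L < fJ P : two equal columns
      have hcols : ∀ k, (X.submatrix fI fJ) k (Fin.castSucc (Fin.last ℓ))
          = (X.submatrix fI fJ) k (Fin.last (ℓ+1)) := by
        intro k
        have hk : fI k ≤ fI (Fin.last (ℓ+1)) := hfI.monotone (Fin.le_last k)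
        simp only [Matrix.submatrix_apply]
        rw [hXu _ _ (lt_of_le_of_lt hk hbad), hXu _ _ (lt_of_le_of_lt hk (lt_trans hbad (hfJ hPL)))]
      rw [Matrix.det_zero_of_column_eq hPL.ne hcols, if_neg]
      rintro ⟨-, h2⟩
      exact absurd (h2 (Fin.castSucc (Fin.last ℓ)) (Fin.last (ℓ+1)) (by simp)) (not_le.mpr hbad)


/-- Lemma: let `X` be an `n × n` matrix with `X_{i,j} = 1` for `i < j` and
`X_{i,j} = 0` for `i > j` (arbitrary diagonal), and let `I = {i_1 < … < i_ℓ}` and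
`J = {j_1 < … < j_ℓ}` be subsets of `[n]`, encoded by the strictly increasing
functions `fI, fJ : Fin ℓ → Fin n`. Then `det(X_{I,J})` equals
`∏_k X_{i_k,i_k}^{χ(i_k=j_k)} (1−X_{i_k,i_k})^{χ(j_{k−1}=i_k)}` if
`i_1 ≤ j_1 ≤ i_2 ≤ j_2 ≤ … ≤ i_ℓ ≤ j_ℓ`, and `0` otherwise (with the convention
`j_0 = 0`, so that the factor `(1−X_{i_1,i_1})^{χ(j_0=i_1)}` never appears). -/
theorem det_submatrix_upper_unitriangular {R : Type*} [CommRing R] (n ℓ : ℕ)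
    (hn : 0 < n) (hℓ : 0 < ℓ) (X : Matrix (Fin n) (Fin n) R)
    (hXu : ∀ i j : Fin n, i < j → X i j = 1) (hXl : ∀ i j : Fin n, j < i → X i j = 0)
    (fI fJ : Fin ℓ → Fin n) (hfI : StrictMono fI) (hfJ : StrictMono fJ) :
    (X.submatrix fI fJ).det =
      if (∀ t : Fin ℓ, fI t ≤ fJ t) ∧
          (∀ s t : Fin ℓ, (s:ℕ) + 1 = (t:ℕ) → fJ s ≤ fI t) then
        ∏ t : Fin ℓ,
          (if fI t = fJ t then X (fI t) (fI t) else 1) *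
            (if h0 : (t:ℕ) = 0 then 1
             else if fJ ⟨(t:ℕ) - 1, by have := t.isLt; omega⟩ = fI t then
               1 - X (fI t) (fI t)
             else 1)
      else 0 := by
  obtain ⟨m, rfl⟩ : ∃ m, ℓ = m + 1 := ⟨ℓ - 1, by omega⟩
  exact det_submatrix_aux X hXu hXl m fI fJ hfI hfJ
end

section
/- Let n and ℓ be positive integers, and let X be an n×n matrix over a commutative ring with X_{i,j} = 1 for 1 ≤ i < j ≤ n and X_{i,j} = 0 for i > j (arbitrary diagonal entries). Let I = {i_1 < i_2 < … < i_{ℓ+1}} and J = {j_1 < j_2 < … < j_ℓ} be subsets of [n], and let 𝟏 denote a column of ℓ+1 entries equal to 1. Then det(𝟏 X_{I,J}) = (−1)^ℓ · ∏_{k=1}^{ℓ} X_{i_k,i_k}^{χ(i_k = j_k)} · (1 − X_{i_{k+1},i_{k+1}})^{χ(j_k = i_{k+1})} if 1 ≤ i_1 ≤ j_1 ≤ i_2 ≤ … ≤ j_ℓ ≤ i_{ℓ+1} ≤ n, and det(𝟏 X_{I,J}) = 0 otherwise. -/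
open Matrix

lemma myPermEqOne {n ℓ : ℕ} (fI : Fin (ℓ+1) → Fin n) (fJ : Fin ℓ → Fin n)
    (hfI : StrictMono fI) (hfJ : StrictMono fJ) (σ : Equiv.Perm (Fin ℓ))
    (h : ∀ s : Fin ℓ, fI (σ s).castSucc ≤ fJ s ∧ fJ s ≤ fI (σ s).succ) : σ = 1 := by
  have key : ∀ k : ℕ, ∀ hk : k < ℓ, σ ⟨k, hk⟩ = ⟨k, hk⟩ := by
    intro k
    induction k using Nat.strong_induction_on with
    | _ k IH =>
      intro hk
      by_contra hne
      set s₀ : Fin ℓ := ⟨k, hk⟩ with hs₀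
      have h1 : s₀ < σ s₀ := by
        rcases lt_trichotomy (σ s₀) s₀ with hlt | heq | hgt
        · have hm := IH (σ s₀ : ℕ) hlt (σ s₀).isLt
          rw [Fin.eta] at hm
          exact absurd (σ.injective hm) hne
        · exact absurd heq hne
        · exact hgt
      have h2 : s₀ < σ.symm s₀ := by
        rcases lt_trichotomy (σ.symm s₀) s₀ with hlt | heq | hgt
        · have hm := IH (σ.symm s₀ : ℕ) hlt (σ.symm s₀).isLt
          rw [Fin.eta] at hm
          rw [Equiv.apply_symm_apply] at hm
          rw [← hm] at hlt
          exact absurd hlt (lt_irrefl _)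
        · have := congrArg σ heq
          rw [Equiv.apply_symm_apply] at this
          exact absurd this.symm hne
        · exact hgt
      have hA : fI s₀.succ ≤ fI (σ s₀).castSucc := by
        apply hfI.monotone
        rw [Fin.le_def]
        simp only [Fin.val_succ, Fin.coe_castSucc]
        exact h1
      have hB : fI (σ s₀).castSucc ≤ fJ s₀ := (h s₀).1
      have hCc : fJ (σ.symm s₀) ≤ fI s₀.succ := by
        have hx := (h (σ.symm s₀)).2
        rwa [Equiv.apply_symm_apply] at hx
      have hD : fJ s₀ < fJ (σ.symm s₀) := hfJ h2
      exact absurd (lt_of_lt_of_le hD (hCc.trans (hA.trans hB))) (lt_irrefl _)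
  ext s
  have := key (s : ℕ) s.isLt
  rw [Fin.eta] at this
  simp [this]

/-- Lemma: let `X` be an `n × n` matrix with `X_{i,j} = 1` for `i < j` and
`X_{i,j} = 0` for `i > j` (arbitrary diagonal), and let `I = {i_1 < … < i_{ℓ+1}}` and
`J = {j_1 < … < j_ℓ}` be subsets of `[n]`, encoded by the strictly increasing
functions `fI : Fin (ℓ+1) → Fin n` and `fJ : Fin ℓ → Fin n`. Then
`det(𝟏 X_{I,J})`, where an all-ones column is prepended to `X_{I,J}`, equals
`(−1)^ℓ ∏_k X_{i_k,i_k}^{χ(i_k=j_k)} (1−X_{i_{k+1},i_{k+1}})^{χ(j_k=i_{k+1})}` if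
`i_1 ≤ j_1 ≤ i_2 ≤ … ≤ j_ℓ ≤ i_{ℓ+1}`, and `0` otherwise. -/
theorem det_one_submatrix_upper_unitriangular {R : Type*} [CommRing R] (n ℓ : ℕ)
    (hn : 0 < n) (hℓ : 0 < ℓ) (X : Matrix (Fin n) (Fin n) R)
    (hXu : ∀ i j : Fin n, i < j → X i j = 1) (hXl : ∀ i j : Fin n, j < i → X i j = 0)
    (fI : Fin (ℓ+1) → Fin n) (fJ : Fin ℓ → Fin n)
    (hfI : StrictMono fI) (hfJ : StrictMono fJ) :
    (Matrix.of fun i j : Fin (ℓ+1) =>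
        if h : (j:ℕ) = 0 then (1 : R)
        else X (fI i) (fJ ⟨(j:ℕ) - 1, by have := j.isLt; omega⟩)).det =
      if ∀ t : Fin ℓ, fI t.castSucc ≤ fJ t ∧ fJ t ≤ fI t.succ then
        (-1 : R)^ℓ *
          ∏ t : Fin ℓ,
            (if fI t.castSucc = fJ t then X (fI t.castSucc) (fI t.castSucc) else 1) *
              (if fJ t = fI t.succ then 1 - X (fI t.succ) (fI t.succ) else 1)
      else 0 := by
  classical
  set M : Matrix (Fin (ℓ+1)) (Fin (ℓ+1)) R := (Matrix.of fun i j : Fin (ℓ+1) =>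
        if h : (j:ℕ) = 0 then (1 : R)
        else X (fI i) (fJ ⟨(j:ℕ) - 1, by have := j.isLt; omega⟩)) with hMdef
  have hM0 : ∀ i, M i 0 = 1 := by
    intro i
    simp [hMdef]
  have hMs : ∀ (i : Fin (ℓ+1)) (t : Fin ℓ), M i t.succ = X (fI i) (fJ t) := by
    intro i t
    simp only [hMdef, Matrix.of_apply, Fin.val_succ, Nat.add_eq_zero, Nat.succ_ne_zero,
      and_false, dite_false]
    have h : (⟨(t:ℕ)+1-1, by omega⟩ : Fin ℓ) = t := Fin.ext (by simp)
    rw [h]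
  set E : Matrix (Fin (ℓ+1)) (Fin (ℓ+1)) R := Matrix.of fun i j =>
      if i = j then (1:R) else if (j:ℕ) = (i:ℕ)+1 then -1 else 0 with hEdef
  have hEdet : E.det = 1 := by
    have hbt : E.BlockTriangular id := by
      intro i j hij
      simp only [hEdef, Matrix.of_apply]
      rw [if_neg, if_neg]
      · have : (j:ℕ) < (i:ℕ) := hij
        omega
      · exact fun hc => absurd hc.symm (ne_of_lt hij)
    rw [Matrix.det_of_upperTriangular hbt]
    apply Finset.prod_eq_one
    intro i _
    simp [hEdef]
  have hBc : ∀ (s : Fin ℓ) (j : Fin (ℓ+1)),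
      (E * M) s.castSucc j = M s.castSucc j - M s.succ j := by
    intro s j
    rw [Matrix.mul_apply]
    have hcs : (s.castSucc : Fin (ℓ+1)) ≠ s.succ := (@Fin.castSucc_lt_succ _ s).ne
    have hterm : ∀ m : Fin (ℓ+1), E s.castSucc m * M m j
        = (if m = s.castSucc then M m j else 0) + (if m = s.succ then -M m j else 0) := by
      intro m
      simp only [hEdef, Matrix.of_apply, Fin.ext_iff, Fin.coe_castSucc, Fin.val_succ]
      split_ifs <;> first | (exfalso; omega) | ring
    rw [Finset.sum_congr rfl (fun m _ => hterm m), Finset.sum_add_distrib,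
      Finset.sum_ite_eq' Finset.univ, Finset.sum_ite_eq' Finset.univ]
    simp [sub_eq_add_neg]
  have hBl : ∀ j : Fin (ℓ+1), (E * M) (Fin.last ℓ) j = M (Fin.last ℓ) j := by
    intro j
    rw [Matrix.mul_apply]
    have hterm : ∀ m : Fin (ℓ+1), E (Fin.last ℓ) m * M m j
        = if m = Fin.last ℓ then M m j else 0 := by
      intro m
      have hmlt := m.isLt
      simp only [hEdef, Matrix.of_apply, Fin.ext_iff, Fin.val_last]
      split_ifs <;> first | (exfalso; omega) | ring
    rw [Finset.sum_congr rfl (fun m _ => hterm m), Finset.sum_ite_eq' Finset.univ]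
    simp
  set N : Matrix (Fin ℓ) (Fin ℓ) R :=
    (E * M).submatrix (Fin.last ℓ).succAbove Fin.succ with hNdef
  have hN : ∀ s t : Fin ℓ, N s t = X (fI s.castSucc) (fJ t) - X (fI s.succ) (fJ t) := by
    intro s t
    simp only [hNdef, Matrix.submatrix_apply, Fin.succAbove_last]
    rw [hBc, hMs, hMs]
  have hdetEM : (E * M).det = (-1:R)^ℓ * N.det := by
    rw [Matrix.det_succ_column_zero]
    rw [Finset.sum_eq_single (Fin.last ℓ)]
    · rw [hBl, hM0]
      simp [hNdef]
    · intro i _ hi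
      rcases Fin.eq_castSucc_or_eq_last i with ⟨s, rfl⟩ | rfl
      swap
      · exact absurd rfl hi
      rw [hBc, hM0, hM0, sub_self]
      ring
    · intro h; exact absurd (Finset.mem_univ _) h
  have hNdiag : N.det = ∏ t : Fin ℓ, N t t := by
    rw [Matrix.det_apply]
    rw [Finset.sum_eq_single (1 : Equiv.Perm (Fin ℓ))]
    · simp
    · intro σ _ hσ
      suffices hz : (∏ s : Fin ℓ, N (σ s) s) = 0 by rw [hz, smul_zero]
      by_cases hall : ∀ s : Fin ℓ, fI (σ s).castSucc ≤ fJ s ∧ fJ s ≤ fI (σ s).succ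
      · exact absurd (myPermEqOne fI fJ hfI hfJ σ hall) hσ
      · push_neg at hall
        obtain ⟨s, hs⟩ := hall
        apply Finset.prod_eq_zero (Finset.mem_univ s)
        rw [hN]
        rcases le_or_gt (fI (σ s).castSucc) (fJ s) with hle | hlt
        · have h2 := hs hle
          have h1 : fI (σ s).castSucc < fJ s :=
            lt_trans (hfI (@Fin.castSucc_lt_succ _ (σ s))) h2
          rw [hXu _ _ h1, hXu _ _ h2, sub_self]
        · have h2 : fJ s < fI (σ s).succ :=
            lt_trans hlt (hfI (@Fin.castSucc_lt_succ _ (σ s)))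
          rw [hXl _ _ hlt, hXl _ _ h2, sub_self]
    · intro h; exact absurd (Finset.mem_univ _) h
  have hfinal : (∏ t : Fin ℓ, N t t) =
      if ∀ t : Fin ℓ, fI t.castSucc ≤ fJ t ∧ fJ t ≤ fI t.succ then
        ∏ t : Fin ℓ,
          (if fI t.castSucc = fJ t then X (fI t.castSucc) (fI t.castSucc) else 1) *
            (if fJ t = fI t.succ then 1 - X (fI t.succ) (fI t.succ) else 1)
      else 0 := by
    split_ifs with hint
    · apply Finset.prod_congr rfl
      intro t _
      rw [hN]
      obtain ⟨h1, h2⟩ := hint t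
      have hcs : fI t.castSucc < fI t.succ := hfI (@Fin.castSucc_lt_succ _ t)
      rcases eq_or_lt_of_le h1 with he1 | hl1
      · have hlt2 : fJ t < fI t.succ := he1 ▸ hcs
        rw [if_pos he1, if_neg (fun hc => absurd (hc ▸ hlt2) (lt_irrefl _)),
          hXl _ _ hlt2, sub_zero, mul_one, ← he1]
      · rcases eq_or_lt_of_le h2 with he2 | hl2
        · rw [if_neg (fun hc => absurd (hc ▸ hl1) (lt_irrefl _)), if_pos he2,
            hXu _ _ hl1, he2, one_mul]
        · rw [if_neg (fun hc => absurd (hc ▸ hl1) (lt_irrefl _)),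
            if_neg (fun hc => absurd (hc ▸ hl2) (lt_irrefl _)),
            hXu _ _ hl1, hXl _ _ hl2, sub_zero, mul_one]
    · push_neg at hint
      obtain ⟨t, ht⟩ := hint
      apply Finset.prod_eq_zero (Finset.mem_univ t)
      rw [hN]
      rcases le_or_gt (fI t.castSucc) (fJ t) with hle | hlt
      · have h2 := ht hle
        have h1 : fI t.castSucc < fJ t :=
          lt_trans (hfI (@Fin.castSucc_lt_succ _ t)) h2
        rw [hXu _ _ h1, hXu _ _ h2, sub_self]
      · have h2 : fJ t < fI t.succ :=
          lt_trans hlt (hfI (@Fin.castSucc_lt_succ _ t))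
        rw [hXl _ _ hlt, hXl _ _ h2, sub_self]
  have hM : M.det = (E * M).det := by
    rw [Matrix.det_mul, hEdet, one_mul]
  rw [hM, hdetEM, hNdiag, hfinal]
  split_ifs with h
  · rfl
  · rw [mul_zero]
end

section
/- Let m and n be positive integers with m even, and let A and B be m×n matrices over a commutative ring. Then Σ_{1≤i_1<j_1≤i_2<j_2≤⋯≤i_{m/2}<j_{m/2}≤n} det(A^{i_1} B^{j_1} A^{i_2} B^{j_2} ⋯ A^{i_{m/2}} B^{j_{m/2}}) = Pf(A·U_n·Bᵗ − B·U_nᵗ·Aᵗ). -/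
open Matrix

/-- The `n × n` strictly upper triangular matrix `U_n` with all entries above the
diagonal equal to `1` and all other entries equal to `0`. -/
def upperTri (R : Type*) [CommRing R] (n : ℕ) : Matrix (Fin n) (Fin n) R :=
  Matrix.of fun i j => if i < j then 1 else 0

open Equiv Finset

theorem Equiv.Perm.apply_inv_self {α : Type*} (f : Equiv.Perm α) (x : α) : f (f⁻¹ x) = x :=
  f.apply_symm_apply x

namespace MSF


variable {R : Type*} [CommRing R] {k n : ℕ}

/-- block-position equivalence -/
def E (k : ℕ) : Fin k × Fin 2 ≃ Fin (2*k) where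
  toFun p := ⟨2 * p.1 + p.2, by have := p.1.isLt; have := p.2.isLt; omega⟩
  invFun c := (⟨c / 2, by have := c.isLt; omega⟩, ⟨c % 2, by omega⟩)
  left_inv p := by
    have := p.2.isLt
    ext <;> simp <;> omega
  right_inv c := by ext; simp; omega

def ev (k : ℕ) (i : Fin k) : Fin (2*k) := E k (i, 0)
def od (k : ℕ) (i : Fin k) : Fin (2*k) := E k (i, 1)

@[simp] lemma ev_val (i : Fin k) : (ev k i : ℕ) = 2 * i := by simp [ev, E]
@[simp] lemma od_val (i : Fin k) : (od k i : ℕ) = 2 * i + 1 := by simp [od, E]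

lemma ev_ne_od (i j : Fin k) : ev k i ≠ od k j := by
  intro h; have := congrArg (Fin.val) h; simp at this; omega

lemma ev_inj : Function.Injective (ev k) := by
  intro i j h; have := congrArg (Fin.val) h; simp at this; exact Fin.ext (by omega)

lemma od_inj : Function.Injective (od k) := by
  intro i j h; have := congrArg (Fin.val) h; simp at this; exact Fin.ext (by omega)

/-- the data type: a permutation of rows together with pairs of columns -/
abbrev Om (k n : ℕ) := Equiv.Perm (Fin (2*k)) × (Fin k → Fin n × Fin n)

variable (A B : Matrix (Fin (2*k)) (Fin n) R)

def val (x : Om k n) : R :=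
  ((Equiv.Perm.sign x.1 : ℤ) : R) *
    ∏ i : Fin k, A (x.1 (ev k i)) (x.2 i).1 * B (x.1 (od k i)) (x.2 i).2

/-- sorting key -/
def skey (x : Om k n) (i : Fin k) : (Fin n ×ₗ Fin n) ×ₗ Fin (2*k) :=
  toLex (toLex ((x.2 i).1, (x.2 i).2), x.1 (ev k i))

/-- choice key (invariant under the involution) -/
def ckey (x : Om k n) (i : Fin k) : Fin n ×ₗ Fin (2*k) :=
  toLex ((x.2 i).1, x.1 (ev k i))

lemma skey_inj (x : Om k n) : Function.Injective (skey x) := by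
  intro i j h
  have h2 : x.1 (ev k i) = x.1 (ev k j) := congrArg (fun p => (ofLex p).2) h
  exact ev_inj (x.1.injective h2)

lemma ckey_inj (x : Om k n) : Function.Injective (ckey x) := by
  intro i j h
  have h2 : x.1 (ev k i) = x.1 (ev k j) := congrArg (fun p => (ofLex p).2) h
  exact ev_inj (x.1.injective h2)

/-- relabelling of blocks -/
def blockPerm (γ : Equiv.Perm (Fin k)) : Equiv.Perm (Fin (2*k)) :=
  (E k).permCongr (Equiv.prodCongrLeft (fun _ : Fin 2 => γ))

@[simp] lemma blockPerm_ev (γ : Equiv.Perm (Fin k)) (i : Fin k) :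
    blockPerm γ (ev k i) = ev k (γ i) := by
  simp [blockPerm, ev, Equiv.permCongr_apply]

@[simp] lemma blockPerm_od (γ : Equiv.Perm (Fin k)) (i : Fin k) :
    blockPerm γ (od k i) = od k (γ i) := by
  simp [blockPerm, od, Equiv.permCongr_apply]

lemma sign_blockPerm (γ : Equiv.Perm (Fin k)) : Equiv.Perm.sign (blockPerm γ) = 1 := by
  rw [blockPerm, Equiv.Perm.sign_permCongr, Equiv.Perm.sign_prodCongrLeft]
  rw [Finset.prod_const]
  simp [Int.units_sq]

lemma blockPerm_mul (γ δ : Equiv.Perm (Fin k)) :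
    blockPerm γ * blockPerm δ = blockPerm (γ * δ) := by
  ext c
  have : c = E k ((E k).symm c) := ((E k).apply_symm_apply c).symm
  rw [this]
  rcases (E k).symm c with ⟨i, b⟩
  simp only [blockPerm, Equiv.Perm.mul_apply, Equiv.permCongr_apply]
  simp

def relabel (γ : Equiv.Perm (Fin k)) (x : Om k n) : Om k n :=
  (x.1 * blockPerm γ, x.2 ∘ γ)

lemma val_relabel (γ : Equiv.Perm (Fin k)) (x : Om k n) :
    val A B (relabel γ x) = val A B x := by
  unfold val relabel
  simp only [Equiv.Perm.sign_mul, sign_blockPerm, mul_one]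
  congr 1
  rw [← Equiv.prod_comp γ (fun i => A (x.1 (ev k i)) (x.2 i).1 * B (x.1 (od k i)) (x.2 i).2)]
  apply Finset.prod_congr rfl
  intro i _
  simp [Equiv.Perm.mul_apply]

lemma skey_relabel (γ : Equiv.Perm (Fin k)) (x : Om k n) :
    skey (relabel γ x) = skey x ∘ γ := by
  funext i; simp [skey, relabel, Equiv.Perm.mul_apply]

lemma ckey_relabel (γ : Equiv.Perm (Fin k)) (x : Om k n) :
    ckey (relabel γ x) = ckey x ∘ γ := by
  funext i; simp [ckey, relabel, Equiv.Perm.mul_apply]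

/-- uniqueness of the sorting permutation for injective tuples -/
lemma sort_unique {α : Type*} [LinearOrder α] {m : ℕ} {f : Fin m → α}
    (hf : Function.Injective f) {σ : Equiv.Perm (Fin m)} (h : Monotone (f ∘ σ)) :
    Tuple.sort f = σ := by
  have := Tuple.unique_monotone (f := f) h (Tuple.monotone_sort f)
  ext i
  exact congrArg Fin.val (hf (congrFun this i)).symm

def canon (x : Om k n) : Om k n := relabel (Tuple.sort (skey x)) x

lemma val_canon (x : Om k n) : val A B (canon x) = val A B x := val_relabel A B _ x

lemma strictMono_skey_canon (x : Om k n) : StrictMono (skey (canon x)) := by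
  rw [canon, skey_relabel]
  exact (Tuple.monotone_sort (skey x)).strictMono_of_injective
    ((skey_inj x).comp (Equiv.injective _))

lemma canon_relabel (γ : Equiv.Perm (Fin k)) (x : Om k n) :
    canon (relabel γ x) = canon x := by
  have hs : Tuple.sort (skey (relabel γ x)) = γ⁻¹ * Tuple.sort (skey x) := by
    apply sort_unique (skey_inj _)
    rw [skey_relabel]
    have : (skey x ∘ γ) ∘ (γ⁻¹ * Tuple.sort (skey x) : Equiv.Perm (Fin k))
        = skey x ∘ Tuple.sort (skey x) := by
      funext i; simp [Equiv.Perm.mul_apply]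
    rw [this]
    exact Tuple.monotone_sort (skey x)
  rw [canon, hs, canon]
  unfold relabel
  refine Prod.ext ?_ ?_
  · simp only
    rw [mul_assoc, blockPerm_mul]
    congr 2
    group
  · funext i
    simp [Equiv.Perm.mul_apply]

lemma canon_eq_self (x : Om k n) (h : Monotone (skey x)) : canon x = x := by
  have : Tuple.sort (skey x) = 1 := sort_unique (skey_inj x) (by simpa using h)
  rw [canon, this]
  unfold relabel blockPerm
  refine Prod.ext ?_ ?_
  · simp only
    convert mul_one x.1
    ext c
    have hc : c = E k ((E k).symm c) := ((E k).apply_symm_apply c).symm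
    rw [hc]
    rcases (E k).symm c with ⟨i, b⟩
    simp [Equiv.permCongr_apply]
  · funext i; simp

/-! ### predicates -/

def pairP (x : Om k n) : Prop := ∀ i, (x.2 i).1 < (x.2 i).2

def ovl (x : Om k n) (i j : Fin k) : Prop :=
  i ≠ j ∧ (x.2 i).1 < (x.2 j).2 ∧ (x.2 j).1 < (x.2 i).2

def bad (x : Om k n) : Prop := ∃ i j, ovl x i j

def can (x : Om k n) : Prop := ∀ i j : Fin k, i < j → skey x i < skey x j

instance : DecidablePred (pairP (k := k) (n := n)) := fun _ => by unfold pairP; infer_instance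
instance (x : Om k n) (i j : Fin k) : Decidable (ovl x i j) := by unfold ovl; infer_instance
instance : DecidablePred (bad (k := k) (n := n)) := fun _ => by unfold bad; infer_instance
instance : DecidablePred (can (k := k) (n := n)) := fun _ => by unfold can; infer_instance

lemma ovl_symm {x : Om k n} {i j : Fin k} (h : ovl x i j) : ovl x j i :=
  ⟨h.1.symm, h.2.2, h.2.1⟩

lemma can_of_strictMono {x : Om k n} (h : StrictMono (skey x)) : can x := fun _ _ hij => h hij

lemma monotone_of_can {x : Om k n} (h : can x) : Monotone (skey x) := by
  intro i j hij
  rcases eq_or_lt_of_le hij with h1 | h1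
  · rw [h1]
  · exact le_of_lt (h _ _ h1)

/-! ### the swap operation -/

def swapData (t u : Fin k) (x : Om k n) : Om k n :=
  (x.1 * Equiv.swap (od k t) (od k u),
   Function.update (Function.update x.2 t ((x.2 t).1, (x.2 u).2)) u ((x.2 u).1, (x.2 t).2))

variable {t u : Fin k} {x : Om k n}

lemma swapData_snd_t (htu : t ≠ u) : (swapData t u x).2 t = ((x.2 t).1, (x.2 u).2) := by
  simp [swapData, Function.update_of_ne htu]

lemma swapData_snd_u : (swapData t u x).2 u = ((x.2 u).1, (x.2 t).2) := by
  simp [swapData]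

lemma swapData_snd_other {w : Fin k} (hwt : w ≠ t) (hwu : w ≠ u) :
    (swapData t u x).2 w = x.2 w := by
  simp [swapData, Function.update_of_ne hwt, Function.update_of_ne hwu]

lemma swapData_fst_ev (i : Fin k) : (swapData t u x).1 (ev k i) = x.1 (ev k i) := by
  have h1 : Equiv.swap (od k t) (od k u) (ev k i) = ev k i :=
    Equiv.swap_apply_of_ne_of_ne (ev_ne_od i t) (ev_ne_od i u)
  simp [swapData, Equiv.Perm.mul_apply, h1]

lemma swapData_fst_od_t : (swapData t u x).1 (od k t) = x.1 (od k u) := by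
  simp [swapData, Equiv.Perm.mul_apply]

lemma swapData_fst_od_u : (swapData t u x).1 (od k u) = x.1 (od k t) := by
  simp [swapData, Equiv.Perm.mul_apply]

lemma swapData_fst_od_other {w : Fin k} (hwt : w ≠ t) (hwu : w ≠ u) :
    (swapData t u x).1 (od k w) = x.1 (od k w) := by
  have h1 : Equiv.swap (od k t) (od k u) (od k w) = od k w :=
    Equiv.swap_apply_of_ne_of_ne (fun h => hwt (od_inj h)) (fun h => hwu (od_inj h))
  simp [swapData, Equiv.Perm.mul_apply, h1]

lemma swapData_snd_fst (htu : t ≠ u) (i : Fin k) :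
    ((swapData t u x).2 i).1 = (x.2 i).1 := by
  by_cases hit : i = t
  · subst hit; rw [swapData_snd_t htu]
  · by_cases hiu : i = u
    · subst hiu; rw [swapData_snd_u]
    · rw [swapData_snd_other hit hiu]

lemma ckey_swapData (htu : t ≠ u) : ckey (swapData t u x) = ckey x := by
  funext i
  unfold ckey
  rw [swapData_snd_fst htu, swapData_fst_ev]

lemma swapData_swapData (htu : t ≠ u) : swapData t u (swapData t u x) = x := by
  refine Prod.ext ?_ ?_
  · show (x.1 * _) * _ = x.1
    rw [mul_assoc]
    simp
  · funext i
    by_cases hit : i = t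
    · subst hit
      rw [swapData_snd_t htu, swapData_snd_u, swapData_snd_t htu]
    · by_cases hiu : i = u
      · subst hiu
        rw [swapData_snd_u, swapData_snd_t htu, swapData_snd_u]
      · rw [swapData_snd_other hit hiu, swapData_snd_other hit hiu]

lemma val_swapData (htu : t ≠ u) : val A B (swapData t u x) = - val A B x := by
  have hsign : Equiv.Perm.sign (swapData t u x).1 = - Equiv.Perm.sign x.1 := by
    show Equiv.Perm.sign (x.1 * _) = _
    rw [Equiv.Perm.sign_mul, Equiv.Perm.sign_swap (fun h => htu (od_inj h)), mul_neg_one]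
  have key : ∏ i : Fin k,
      A ((swapData t u x).1 (ev k i)) ((swapData t u x).2 i).1 *
        B ((swapData t u x).1 (od k i)) ((swapData t u x).2 i).2
      = ∏ i : Fin k, A (x.1 (ev k i)) (x.2 i).1 * B (x.1 (od k i)) (x.2 i).2 := by
    set f := fun i : Fin k =>
      A ((swapData t u x).1 (ev k i)) ((swapData t u x).2 i).1 *
        B ((swapData t u x).1 (od k i)) ((swapData t u x).2 i).2 with hf
    set g := fun i : Fin k => A (x.1 (ev k i)) (x.2 i).1 * B (x.1 (od k i)) (x.2 i).2 with hg
    have ht : t ∈ (univ : Finset (Fin k)) := mem_univ t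
    have hu : u ∈ (univ : Finset (Fin k)).erase t := by
      rw [mem_erase]; exact ⟨fun h => htu h.symm, mem_univ u⟩
    rw [← Finset.mul_prod_erase _ f ht, ← Finset.mul_prod_erase _ f hu,
        ← Finset.mul_prod_erase _ g ht, ← Finset.mul_prod_erase _ g hu]
    have hrest : ∏ i ∈ (univ.erase t).erase u, f i = ∏ i ∈ (univ.erase t).erase u, g i := by
      apply Finset.prod_congr rfl
      intro w hw
      rw [mem_erase, mem_erase] at hw
      have hwt := hw.2.1
      have hwu := hw.1
      rw [hf, hg]
      simp only
      rw [swapData_snd_other hwt hwu, swapData_fst_ev, swapData_fst_od_other hwt hwu]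
    rw [hrest]
    have h1 : f t = A (x.1 (ev k t)) (x.2 t).1 * B (x.1 (od k u)) (x.2 u).2 := by
      rw [hf]; simp only
      rw [swapData_snd_t htu, swapData_fst_ev, swapData_fst_od_t]
    have h2 : f u = A (x.1 (ev k u)) (x.2 u).1 * B (x.1 (od k t)) (x.2 t).2 := by
      rw [hf]; simp only
      rw [swapData_snd_u, swapData_fst_ev, swapData_fst_od_u]
    rw [h1, h2, hg]
    ring
  unfold val
  rw [key, hsign]
  push_cast
  ring

/-! ### overlap set invariance -/

lemma pairP_swapData (hp : pairP x) (ho : ovl x t u) : pairP (swapData t u x) := by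
  intro i
  by_cases hit : i = t
  · subst hit; rw [swapData_snd_t ho.1]; exact ho.2.1
  · by_cases hiu : i = u
    · subst hiu; rw [swapData_snd_u]; exact ho.2.2
    · rw [swapData_snd_other hit hiu]; exact hp i

lemma ovl_swapData_tu (hp : pairP x) (ho : ovl x t u) : ovl (swapData t u x) t u := by
  refine ⟨ho.1, ?_, ?_⟩
  · rw [swapData_snd_t ho.1, swapData_snd_u]
    exact hp t
  · rw [swapData_snd_t ho.1, swapData_snd_u]
    exact hp u

lemma exists_ovl_of_swap (hp : pairP x) (ho : ovl x t u) {w : Fin k}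
    (h : ∃ j, ovl (swapData t u x) w j) : ∃ j, ovl x w j := by
  have htu := ho.1
  by_cases hwt : w = t
  · exact ⟨u, hwt ▸ ho⟩
  by_cases hwu : w = u
  · exact ⟨t, hwu ▸ ovl_symm ho⟩
  obtain ⟨j, hj⟩ := h
  by_cases hjt : t = j
  · subst hjt
    rw [ovl] at hj
    rw [swapData_snd_other hwt hwu, swapData_snd_t htu] at hj
    obtain ⟨-, h1, h2⟩ := hj
    by_cases hc : (x.2 w).1 < (x.2 t).2
    · exact ⟨t, ⟨hwt, hc, h2⟩⟩
    · push_neg at hc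
      by_cases hc2 : (x.2 u).1 < (x.2 w).2
      · exact ⟨u, ⟨hwu, h1, hc2⟩⟩
      · push_neg at hc2
        exfalso
        have h3 := hp w
        have h5 := ho.2.2
        have a1 := lt_of_le_of_lt hc h3
        have a2 := lt_of_le_of_lt hc2 h5
        exact absurd (lt_trans a1 a2) (lt_irrefl _)
  by_cases hju : u = j
  · subst hju
    rw [ovl] at hj
    rw [swapData_snd_other hwt hwu, swapData_snd_u] at hj
    obtain ⟨-, h1, h2⟩ := hj
    by_cases hc : (x.2 t).1 < (x.2 w).2
    · exact ⟨t, ⟨hwt, h1, hc⟩⟩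
    · push_neg at hc
      by_cases hc2 : (x.2 w).1 < (x.2 u).2
      · exact ⟨u, ⟨hwu, hc2, h2⟩⟩
      · push_neg at hc2
        exfalso
        have h3 := hp w
        have h5 := ho.2.1
        have a1 := lt_of_le_of_lt hc2 h3
        have a2 := lt_of_le_of_lt hc h5
        exact absurd (lt_trans a1 a2) (lt_irrefl _)
  · rw [ovl] at hj
    rw [swapData_snd_other hwt hwu, swapData_snd_other (fun h => hjt h.symm) (fun h => hju h.symm)] at hj
    exact ⟨j, hj⟩

lemma mem_O_swapData (hp : pairP x) (ho : ovl x t u) (w : Fin k) :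
    (∃ j, ovl (swapData t u x) w j) ↔ (∃ j, ovl x w j) := by
  constructor
  · exact exists_ovl_of_swap hp ho
  · intro h
    have h2 := exists_ovl_of_swap (pairP_swapData hp ho) (ovl_swapData_tu hp ho) (w := w)
    rw [swapData_swapData ho.1] at h2
    exact h2 h

/-! ### selection of the two minimal overlapping blocks -/

def IsSel (x : Om k n) (t u : Fin k) : Prop :=
  (∃ j, ovl x t j) ∧ (∃ j, ovl x u j) ∧ ckey x t < ckey x u ∧
  (∀ w, (∃ j, ovl x w j) → w ≠ t → ckey x t < ckey x w) ∧
  (∀ w, (∃ j, ovl x w j) → w ≠ t → w ≠ u → ckey x u < ckey x w)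

lemma IsSel.t_ne_u (h : IsSel x t u) : t ≠ u := by
  intro e
  exact absurd (e ▸ h.2.2.1) (lt_irrefl _)

lemma sel_exists (hb : bad x) : ∃ t u, IsSel x t u := by
  obtain ⟨i, j, hij⟩ := hb
  classical
  set O : Finset (Fin k) := univ.filter (fun w => ∃ j, ovl x w j) with hO
  have hiO : i ∈ O := by
    rw [hO, mem_filter]; exact ⟨mem_univ i, ⟨j, hij⟩⟩
  have hjO : j ∈ O := by
    rw [hO, mem_filter]; exact ⟨mem_univ j, ⟨i, ovl_symm hij⟩⟩
  obtain ⟨t, htO, htmin⟩ := O.exists_min_image (ckey x) ⟨i, hiO⟩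
  have hO' : (O.erase t).Nonempty := by
    rcases eq_or_ne i t with rfl | hne
    · exact ⟨j, mem_erase.mpr ⟨fun h => hij.1 h.symm, hjO⟩⟩
    · exact ⟨i, mem_erase.mpr ⟨hne, hiO⟩⟩
  obtain ⟨u, huE, humin⟩ := (O.erase t).exists_min_image (ckey x) hO'
  have huO : u ∈ O := (mem_erase.mp huE).2
  have hut : u ≠ t := (mem_erase.mp huE).1
  have hstrict : ∀ w, w ∈ O → w ≠ t → ckey x t < ckey x w := by
    intro w hw hwt
    rcases lt_or_eq_of_le (htmin w hw) with h | h
    · exact h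
    · exact absurd (ckey_inj x h) (fun e => hwt e.symm)
  refine ⟨t, u, ?_, ?_, ?_, ?_, ?_⟩
  · exact (mem_filter.mp htO).2
  · exact (mem_filter.mp huO).2
  · exact hstrict u huO hut
  · intro w hw hwt
    exact hstrict w (mem_filter.mpr ⟨mem_univ w, hw⟩) hwt
  · intro w hw hwt hwu
    have hwE : w ∈ O.erase t := mem_erase.mpr ⟨hwt, mem_filter.mpr ⟨mem_univ w, hw⟩⟩
    rcases lt_or_eq_of_le (humin w hwE) with h | h
    · exact h
    · exact absurd (ckey_inj x h) (fun e => hwu e.symm)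

lemma sel_unique {t' u' : Fin k} (h1 : IsSel x t u) (h2 : IsSel x t' u') :
    t = t' ∧ u = u' := by
  have htt : t = t' := by
    by_contra hne
    have a1 := h1.2.2.2.1 t' h2.1 (fun e => hne e.symm)
    have a2 := h2.2.2.2.1 t h1.1 hne
    exact absurd (lt_trans a1 a2) (lt_irrefl _)
  subst htt
  refine ⟨rfl, ?_⟩
  by_contra hne
  have a1 := h1.2.2.2.2 u' h2.2.1 h2.t_ne_u.symm (fun e => hne e.symm)
  have a2 := h2.2.2.2.2 u h1.2.1 h1.t_ne_u.symm hne
  exact absurd (lt_trans a1 a2) (lt_irrefl _)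

lemma ckey_lt_iff (x : Om k n) (i j : Fin k) :
    ckey x i < ckey x j ↔
      ((x.2 i).1 < (x.2 j).1 ∨ ((x.2 i).1 = (x.2 j).1 ∧ x.1 (ev k i) < x.1 (ev k j))) :=
  Prod.Lex.lt_iff

lemma sel_ovl (hp : pairP x) (h : IsSel x t u) : ovl x t u := by
  have htu := h.t_ne_u
  by_contra hno
  have hno' : ¬ ((x.2 t).1 < (x.2 u).2 ∧ (x.2 u).1 < (x.2 t).2) := fun hc => hno ⟨htu, hc⟩
  rcases (ckey_lt_iff x t u).mp h.2.2.1 with hpp | ⟨hpe, -⟩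
  · have h1 : (x.2 t).1 < (x.2 u).2 := lt_trans hpp (hp u)
    have h2 : ¬ ((x.2 u).1 < (x.2 t).2) := fun hq => hno' ⟨h1, hq⟩
    push_neg at h2
    obtain ⟨v, hv⟩ := h.1
    have hvlt : (x.2 v).1 < (x.2 u).1 := lt_of_lt_of_le hv.2.2 h2
    have hvu : v ≠ u := by
      intro e; subst e; exact absurd hvlt (lt_irrefl _)
    have hvt : v ≠ t := hv.1.symm
    have a1 := h.2.2.2.2 v ⟨t, ovl_symm hv⟩ hvt hvu
    have a2 : ckey x v < ckey x u := (ckey_lt_iff x v u).mpr (Or.inl hvlt)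
    exact absurd (lt_trans a1 a2) (lt_irrefl _)
  · exact hno' ⟨hpe ▸ hp u, hpe ▸ hp t⟩

lemma IsSel_swapData (hp : pairP x) (h : IsSel x t u) : IsSel (swapData t u x) t u := by
  have ho := sel_ovl hp h
  have hck : ckey (swapData t u x) = ckey x := ckey_swapData ho.1
  refine ⟨?_, ?_, ?_, ?_, ?_⟩
  · exact (mem_O_swapData hp ho t).mpr h.1
  · exact (mem_O_swapData hp ho u).mpr h.2.1
  · rw [hck]; exact h.2.2.1
  · intro w hw hwt
    rw [hck]; exact h.2.2.2.1 w ((mem_O_swapData hp ho w).mp hw) hwt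
  · intro w hw hwt hwu
    rw [hck]; exact h.2.2.2.2 w ((mem_O_swapData hp ho w).mp hw) hwt hwu

/-! ### equivariance under relabelling -/

lemma ovl_relabel (γ : Equiv.Perm (Fin k)) (i j : Fin k) :
    ovl (relabel γ x) i j ↔ ovl x (γ i) (γ j) := by
  unfold ovl relabel
  simp only [Function.comp_apply]
  constructor
  · rintro ⟨h1, h2⟩; exact ⟨fun e => h1 (γ.injective e), h2⟩
  · rintro ⟨h1, h2⟩; exact ⟨fun e => h1 (congrArg γ e), h2⟩

lemma exists_ovl_relabel (γ : Equiv.Perm (Fin k)) (w : Fin k) :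
    (∃ j, ovl (relabel γ x) w j) ↔ ∃ j, ovl x (γ w) j := by
  constructor
  · rintro ⟨j, hj⟩; exact ⟨γ j, (ovl_relabel γ w j).mp hj⟩
  · rintro ⟨j, hj⟩
    refine ⟨γ⁻¹ j, (ovl_relabel γ w (γ⁻¹ j)).mpr ?_⟩
    simpa using hj

lemma IsSel_relabel (γ : Equiv.Perm (Fin k)) (h : IsSel x t u) :
    IsSel (relabel γ x) (γ⁻¹ t) (γ⁻¹ u) := by
  have hck : ∀ w, ckey (relabel γ x) w = ckey x (γ w) := fun w =>
    congrFun (ckey_relabel γ x) w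
  refine ⟨?_, ?_, ?_, ?_, ?_⟩
  · rw [exists_ovl_relabel γ]; simpa using h.1
  · rw [exists_ovl_relabel γ]; simpa using h.2.1
  · rw [hck, hck]; simpa using h.2.2.1
  · intro w hw hwt
    rw [hck, hck]
    simp only [Equiv.Perm.apply_inv_self]
    refine h.2.2.2.1 (γ w) ((exists_ovl_relabel γ w).mp hw) ?_
    intro e
    exact hwt (by rw [← e]; simp)
  · intro w hw hwt hwu
    rw [hck, hck]
    simp only [Equiv.Perm.apply_inv_self]
    refine h.2.2.2.2 (γ w) ((exists_ovl_relabel γ w).mp hw) ?_ ?_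
    · intro e; exact hwt (by rw [← e]; simp)
    · intro e; exact hwu (by rw [← e]; simp)

lemma swapData_relabel (γ : Equiv.Perm (Fin k)) :
    swapData (γ⁻¹ t) (γ⁻¹ u) (relabel γ x) = relabel γ (swapData t u x) := by
  refine Prod.ext ?_ ?_
  · show (x.1 * blockPerm γ) * Equiv.swap (od k (γ⁻¹ t)) (od k (γ⁻¹ u))
      = (x.1 * Equiv.swap (od k t) (od k u)) * blockPerm γ
    have h2 := Equiv.swap_apply_apply (blockPerm γ) (od k (γ⁻¹ t)) (od k (γ⁻¹ u))
    rw [blockPerm_od, blockPerm_od, Equiv.Perm.apply_inv_self, Equiv.Perm.apply_inv_self] at h2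
    rw [mul_assoc, mul_assoc]
    congr 1
    rw [h2]
    group
  · funext i
    show Function.update (Function.update (x.2 ∘ γ) _ _) _ _ i
      = (Function.update (Function.update x.2 t ((x.2 t).1, (x.2 u).2)) u
          ((x.2 u).1, (x.2 t).2)) (γ i)
    by_cases hiu : i = γ⁻¹ u
    · subst hiu
      have e1 : γ (γ⁻¹ u) = u := Equiv.Perm.apply_inv_self γ u
      have e2 : γ (γ⁻¹ t) = t := Equiv.Perm.apply_inv_self γ t
      rw [Function.update_self, e1, Function.update_self]
      show ((x.2 (γ (γ⁻¹ u))).1, (x.2 (γ (γ⁻¹ t))).2) = ((x.2 u).1, (x.2 t).2)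
      rw [e1, e2]
    · have hgu : γ i ≠ u := by
        intro e; exact hiu (by rw [← e]; simp)
      rw [Function.update_of_ne hiu, Function.update_of_ne hgu]
      by_cases hit : i = γ⁻¹ t
      · subst hit
        have e1 : γ (γ⁻¹ u) = u := Equiv.Perm.apply_inv_self γ u
        have e2 : γ (γ⁻¹ t) = t := Equiv.Perm.apply_inv_self γ t
        rw [Function.update_self, e2, Function.update_self]
        show ((x.2 (γ (γ⁻¹ t))).1, (x.2 (γ (γ⁻¹ u))).2) = ((x.2 t).1, (x.2 u).2)
        rw [e1, e2]
      · have hgt : γ i ≠ t := by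
          intro e; exact hit (by rw [← e]; simp)
        rw [Function.update_of_ne hit, Function.update_of_ne hgt]
        rfl

/-! ### the flip involution -/

open scoped Classical in
noncomputable def flip (x : Om k n) : Om k n :=
  if h : ∃ p : Fin k × Fin k, IsSel x p.1 p.2 then
    canon (swapData h.choose.1 h.choose.2 x)
  else x

lemma flip_eq (h : IsSel x t u) : flip x = canon (swapData t u x) := by
  have he : ∃ p : Fin k × Fin k, IsSel x p.1 p.2 := ⟨(t, u), h⟩
  rw [flip, dif_pos he]
  obtain ⟨h1, h2⟩ := sel_unique he.choose_spec h
  rw [h1, h2]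

lemma pairP_relabel (γ : Equiv.Perm (Fin k)) (hp : pairP x) : pairP (relabel γ x) :=
  fun i => hp (γ i)

lemma val_flip (hp : pairP x) (h : IsSel x t u) :
    val A B (flip x) = - val A B x := by
  rw [flip_eq h, val_canon, val_swapData A B h.t_ne_u]

lemma pairP_flip (hp : pairP x) (h : IsSel x t u) : pairP (flip x) := by
  rw [flip_eq h]
  exact pairP_relabel _ (pairP_swapData hp (sel_ovl hp h))

lemma can_flip (hp : pairP x) (h : IsSel x t u) : can (flip x) := by
  rw [flip_eq h]
  exact can_of_strictMono (strictMono_skey_canon _)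

lemma bad_flip (hp : pairP x) (h : IsSel x t u) : bad (flip x) := by
  rw [flip_eq h]
  have ho := sel_ovl hp h
  have h1 : ovl (swapData t u x) t u := ovl_swapData_tu hp ho
  set δ := Tuple.sort (skey (swapData t u x))
  refine ⟨δ⁻¹ t, δ⁻¹ u, ?_⟩
  rw [show canon (swapData t u x) = relabel δ (swapData t u x) from rfl,
    ovl_relabel]
  simpa using h1

lemma flip_flip (hp : pairP x) (hcan : can x) (h : IsSel x t u) :
    flip (flip x) = x := by
  have ho := sel_ovl hp h
  rw [flip_eq h]
  set x' := swapData t u x with hx'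
  set δ := Tuple.sort (skey x') with hδ
  have hy : canon x' = relabel δ x' := rfl
  have hsel' : IsSel x' t u := IsSel_swapData hp h
  have hsel'' : IsSel (relabel δ x') (δ⁻¹ t) (δ⁻¹ u) := IsSel_relabel δ hsel'
  rw [hy, flip_eq hsel'', swapData_relabel, canon_relabel, hx',
    swapData_swapData ho.1, canon_eq_self _ (monotone_of_can hcan)]

lemma blockPerm_one : blockPerm (1 : Equiv.Perm (Fin k)) = 1 := by
  ext c
  have hc : c = E k ((E k).symm c) := ((E k).apply_symm_apply c).symm
  rw [hc]
  rcases (E k).symm c with ⟨i, b⟩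
  simp [blockPerm, Equiv.permCongr_apply]

lemma flip_ne (hp : pairP x) (h : IsSel x t u) : flip x ≠ x := by
  intro he
  rw [flip_eq h] at he
  set x' := swapData t u x with hx'
  set δ := Tuple.sort (skey x') with hδ
  have h1 : ∀ i, x.1 (ev k (δ i)) = x.1 (ev k i) := by
    intro i
    have := congrArg (fun z : Om k n => z.1 (ev k i)) he
    rw [show canon x' = relabel δ x' from rfl] at this
    rw [show (relabel δ x').1 (ev k i) = x'.1 (ev k (δ i)) by
      simp [relabel, Equiv.Perm.mul_apply]] at this
    rw [hx', swapData_fst_ev] at this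
    exact this
  have hδ1 : δ = 1 := by
    ext i
    have := ev_inj (x.1.injective (h1 i))
    rw [this]; rfl
  rw [show canon x' = relabel δ x' from rfl, hδ1] at he
  have he2 : x' = x := by
    rw [← he]
    unfold relabel
    rw [blockPerm_one, mul_one]
    refine Prod.ext rfl ?_
    funext i; rfl
  have := congrArg (fun z : Om k n => z.1 (od k t)) he2
  rw [hx', swapData_fst_od_t] at this
  exact h.t_ne_u (od_inj (x.1.injective this)).symm

/-! ### vanishing of the bad part -/

lemma sum_bad_zero :
    ∑ x ∈ univ.filter (fun x : Om k n => pairP x ∧ can x ∧ bad x), val A B x = 0 := by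
  classical
  apply Finset.sum_involution (fun x _ => flip x)
  · intro x hx
    simp only [mem_filter] at hx
    obtain ⟨-, hp, hcan, hb⟩ := hx
    obtain ⟨t, u, hsel⟩ := sel_exists hb
    rw [val_flip A B hp hsel]
    ring
  · intro x hx _
    simp only [mem_filter] at hx
    obtain ⟨-, hp, hcan, hb⟩ := hx
    obtain ⟨t, u, hsel⟩ := sel_exists hb
    exact flip_ne hp hsel
  · intro x hx
    simp only [mem_filter] at hx ⊢
    obtain ⟨-, hp, hcan, hb⟩ := hx
    obtain ⟨t, u, hsel⟩ := sel_exists hb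
    exact ⟨mem_univ _, pairP_flip hp hsel, can_flip hp hsel, bad_flip hp hsel⟩
  · intro x hx
    simp only [mem_filter] at hx
    obtain ⟨-, hp, hcan, hb⟩ := hx
    obtain ⟨t, u, hsel⟩ := sel_exists hb
    exact flip_flip hp hcan hsel

/-! ### the determinant side -/

def seqP (x : Om k n) : Prop :=
  ∀ i j : Fin k, (i : ℕ) + 1 = (j : ℕ) → (x.2 i).2 ≤ (x.2 j).1

instance : DecidablePred (seqP (k := k) (n := n)) := fun _ => by unfold seqP; infer_instance

lemma prod_blocks (f : Fin (2*k) → R) :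
    ∏ c, f c = ∏ i : Fin k, f (ev k i) * f (od k i) := by
  rw [← Equiv.prod_comp (E k) f, Fintype.prod_prod_type]
  apply Finset.prod_congr rfl
  intro i _
  rw [Fin.prod_univ_two]
  rfl

lemma det_eq (d : Fin (2*k) → Fin n) :
    (Matrix.of fun r c : Fin (2*k) => if (c : ℕ) % 2 = 0 then A r (d c) else B r (d c)).det
    = ∑ τ : Equiv.Perm (Fin (2*k)), val A B (τ, fun i => (d (ev k i), d (od k i))) := by
  rw [Matrix.det_apply]
  apply Finset.sum_congr rfl
  intro τ _
  rw [Units.smul_def, zsmul_eq_mul]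
  unfold val
  congr 1
  rw [prod_blocks (fun c => (Matrix.of fun r c : Fin (2*k) =>
    if (c : ℕ) % 2 = 0 then A r (d c) else B r (d c)) (τ c) c)]
  apply Finset.prod_congr rfl
  intro i _
  have h1 : ((ev k i : ℕ)) % 2 = 0 := by rw [ev_val]; omega
  have h2 : ¬ ((od k i : ℕ) % 2 = 0) := by rw [od_val]; omega
  simp only [Matrix.of_apply, h1, if_pos, if_true]
  rw [if_neg h2]

def half (c : Fin (2*k)) : Fin k := ⟨(c : ℕ) / 2, by have := c.isLt; omega⟩

lemma half_ev (i : Fin k) : half (ev k i) = i := by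
  ext; simp only [half, ev_val]; omega

lemma half_od (i : Fin k) : half (od k i) = i := by
  ext; simp only [half, od_val]; omega

lemma ev_half {c : Fin (2*k)} (hc : (c : ℕ) % 2 = 0) : ev k (half c) = c := by
  ext; simp only [half, ev_val]; omega

lemma od_half {c : Fin (2*k)} (hc : (c : ℕ) % 2 = 1) : od k (half c) = c := by
  ext; simp only [half, od_val]; omega

def dOf (P : Fin k → Fin n × Fin n) (c : Fin (2*k)) : Fin n :=
  if (c : ℕ) % 2 = 0 then (P (half c)).1 else (P (half c)).2

lemma dOf_ev (P : Fin k → Fin n × Fin n) (i : Fin k) : dOf P (ev k i) = (P i).1 := by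
  unfold dOf
  have h1 : ((ev k i : ℕ)) % 2 = 0 := by rw [ev_val]; omega
  rw [if_pos h1, half_ev]

lemma dOf_od (P : Fin k → Fin n × Fin n) (i : Fin k) : dOf P (od k i) = (P i).2 := by
  unfold dOf
  have h1 : ¬ ((od k i : ℕ) % 2 = 0) := by rw [od_val]; omega
  rw [if_neg h1, half_od]

def Pof (d : Fin (2*k) → Fin n) : Fin k → Fin n × Fin n := fun i => (d (ev k i), d (od k i))

lemma dOf_Pof (d : Fin (2*k) → Fin n) : dOf (Pof d) = d := by
  funext c
  unfold dOf Pof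
  by_cases hc : (c : ℕ) % 2 = 0
  · rw [if_pos hc]
    simp only
    rw [ev_half hc]
  · rw [if_neg hc]
    simp only
    rw [od_half (by omega)]

lemma Pof_dOf (P : Fin k → Fin n × Fin n) : Pof (dOf P) = P := by
  funext i
  unfold Pof
  rw [dOf_ev, dOf_od]

def dcond (d : Fin (2*k) → Fin n) : Prop :=
  ∀ s t : Fin (2*k), (s : ℕ) + 1 = (t : ℕ) →
    ((s : ℕ) % 2 = 0 → d s < d t) ∧ ((s : ℕ) % 2 = 1 → d s ≤ d t)

lemma dcond_iff (d : Fin (2*k) → Fin n) :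
    dcond d ↔ ((∀ i, (Pof d i).1 < (Pof d i).2) ∧ seqP ((1 : Equiv.Perm (Fin (2*k))), Pof d)) := by
  constructor
  · intro h
    constructor
    · intro i
      have := (h (ev k i) (od k i) (by simp only [ev_val, od_val])).1
        (by rw [ev_val]; omega)
      exact this
    · intro i j hij
      show (Pof d i).2 ≤ (Pof d j).1
      have := (h (od k i) (ev k j) (by simp only [ev_val, od_val]; omega)).2
        (by rw [od_val]; omega)
      exact this
  · rintro ⟨h1, h2⟩
    intro s t hst
    constructor
    · intro hs
      have hs2 : (s : ℕ) / 2 < k := by have := t.isLt; omega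
      have hes : s = ev k ⟨(s : ℕ) / 2, hs2⟩ := by ext; simp only [ev_val]; omega
      have het : t = od k ⟨(s : ℕ) / 2, hs2⟩ := by ext; simp only [od_val]; omega
      rw [hes, het]
      exact h1 ⟨(s : ℕ) / 2, hs2⟩
    · intro hs
      have hs2 : (s : ℕ) / 2 < k := by have := s.isLt; omega
      have ht2 : (t : ℕ) / 2 < k := by have := t.isLt; omega
      have hes : s = od k ⟨(s : ℕ) / 2, hs2⟩ := by ext; simp only [od_val]; omega
      have het : t = ev k ⟨(t : ℕ) / 2, ht2⟩ := by ext; simp only [ev_val]; omega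
      rw [hes, het]
      exact h2 ⟨(s : ℕ) / 2, hs2⟩ ⟨(t : ℕ) / 2, ht2⟩ (by simp only; omega)

instance : DecidablePred (dcond (k := k) (n := n)) := fun _ => by unfold dcond; infer_instance

lemma lhs_eq :
    (∑ d ∈ Finset.univ.filter (fun d : Fin (2*k) → Fin n => dcond d),
      (Matrix.of fun r c : Fin (2*k) =>
        if (c : ℕ) % 2 = 0 then A r (d c) else B r (d c)).det)
    = ∑ x ∈ univ.filter (fun x : Om k n => pairP x ∧ seqP x), val A B x := by
  classical
  have step1 : (∑ d ∈ Finset.univ.filter (fun d : Fin (2*k) → Fin n => dcond d),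
      (Matrix.of fun r c : Fin (2*k) =>
        if (c : ℕ) % 2 = 0 then A r (d c) else B r (d c)).det)
      = ∑ z ∈ (Finset.univ.filter (fun d : Fin (2*k) → Fin n => dcond d)) ×ˢ
          (univ : Finset (Equiv.Perm (Fin (2*k)))), val A B (z.2, Pof z.1) := by
    rw [Finset.sum_product]
    apply Finset.sum_congr rfl
    intro d _
    exact det_eq A B d
  rw [step1]
  apply Finset.sum_nbij' (i := fun z => ((z.2, Pof z.1) : Om k n))
    (j := fun x : Om k n => (dOf x.2, x.1))
  · intro z hz
    rw [Finset.mem_product, Finset.mem_filter] at hz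
    rw [Finset.mem_filter]
    obtain ⟨⟨-, hd⟩, -⟩ := hz
    have := (dcond_iff z.1).mp hd
    exact ⟨mem_univ _, this.1, this.2⟩
  · intro x hx
    rw [Finset.mem_filter] at hx
    rw [Finset.mem_product, Finset.mem_filter]
    obtain ⟨-, h1, h2⟩ := hx
    refine ⟨⟨mem_univ _, ?_⟩, mem_univ _⟩
    rw [dcond_iff]
    rw [Pof_dOf]
    exact ⟨h1, h2⟩
  · intro z _
    refine Prod.ext ?_ rfl
    exact dOf_Pof z.1
  · intro x _
    refine Prod.ext rfl ?_
    exact Pof_dOf x.2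
  · intro z _
    rfl

/-! ### predicate equivalence -/

lemma seq_chain (hp : pairP x) (hs : seqP x) :
    ∀ (m : ℕ) (i j : Fin k), (j : ℕ) = (i : ℕ) + m + 1 → (x.2 i).2 ≤ (x.2 j).1 := by
  intro m
  induction m with
  | zero =>
    intro i j hj
    exact hs i j (by omega)
  | succ m ih =>
    intro i j hj
    have hj' : (i : ℕ) + m + 1 < k := by have := j.isLt; omega
    set j' : Fin k := ⟨(i : ℕ) + m + 1, hj'⟩ with hjdef
    have h1 : (x.2 i).2 ≤ (x.2 j').1 := ih i j' rfl
    have h2 : (x.2 j').1 < (x.2 j').2 := hp j'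
    have h3 : (x.2 j').2 ≤ (x.2 j).1 := hs j' j (by simp only [hjdef]; omega)
    exact le_trans h1 (le_trans (le_of_lt h2) h3)

lemma chain_lt (hp : pairP x) (hs : seqP x) {i j : Fin k} (hij : i < j) :
    (x.2 i).2 ≤ (x.2 j).1 := by
  have : (j : ℕ) = (i : ℕ) + ((j : ℕ) - (i : ℕ) - 1) + 1 := by
    have := (Fin.lt_def).mp hij; omega
  exact seq_chain hp hs _ i j this

lemma can_of_seq (hp : pairP x) (hs : seqP x) : can x := by
  intro i j hij
  have h1 : (x.2 i).1 < (x.2 j).1 :=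
    lt_of_lt_of_le (hp i) (chain_lt hp hs hij)
  rw [skey, skey]
  rw [Prod.Lex.lt_iff]
  left
  rw [Prod.Lex.lt_iff]
  left
  exact h1

lemma not_bad_of_seq (hp : pairP x) (hs : seqP x) : ¬ bad x := by
  rintro ⟨i, j, hij, h1, h2⟩
  rcases lt_or_gt_of_ne hij with h | h
  · exact absurd (lt_of_le_of_lt (chain_lt hp hs h) h2) (lt_irrefl _)
  · exact absurd (lt_of_le_of_lt (chain_lt hp hs h) h1) (lt_irrefl _)

lemma p_le_of_skey_lt {i j : Fin k} (h : skey x i < skey x j) :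
    (x.2 i).1 ≤ (x.2 j).1 := by
  rcases Prod.Lex.lt_iff.mp h with h1 | ⟨h1, -⟩
  · rcases Prod.Lex.lt_iff.mp h1 with h2 | ⟨h2, -⟩
    · exact le_of_lt h2
    · exact le_of_eq h2
  · have : (toLex ((x.2 i).1, (x.2 i).2) : Fin n ×ₗ Fin n)
        = toLex ((x.2 j).1, (x.2 j).2) := h1
    exact le_of_eq (congrArg (fun z => (ofLex z).1) this)

lemma seq_of_can_not_bad (hp : pairP x) (hc : can x) (hnb : ¬ bad x) : seqP x := by
  intro i j hij
  have hlt : i < j := by rw [Fin.lt_def]; omega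
  have hne : i ≠ j := Fin.ne_of_lt hlt
  by_contra hcon
  push_neg at hcon
  apply hnb
  refine ⟨i, j, hne, ?_, hcon⟩
  have hple : (x.2 i).1 ≤ (x.2 j).1 := p_le_of_skey_lt (hc i j hlt)
  exact lt_of_le_of_lt hple (hp j)

lemma filter_seq_eq :
    univ.filter (fun x : Om k n => pairP x ∧ seqP x)
      = univ.filter (fun x : Om k n => pairP x ∧ can x ∧ ¬ bad x) := by
  apply Finset.filter_congr
  intro x _
  constructor
  · rintro ⟨hp, hs⟩
    exact ⟨hp, can_of_seq hp hs, not_bad_of_seq hp hs⟩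
  · rintro ⟨hp, hc, hnb⟩
    exact ⟨hp, seq_of_can_not_bad hp hc hnb⟩

/-! ### the pfaffian side -/

def pairsF (n : ℕ) : Finset (Fin n × Fin n) := univ.filter (fun pq => pq.1 < pq.2)

lemma entry_eq (r s : Fin (2*k)) :
    (A * upperTri R n * Bᵀ - B * (upperTri R n)ᵀ * Aᵀ) r s
      = ∑ pq ∈ pairsF n, (A r pq.1 * B s pq.2 - A s pq.1 * B r pq.2) := by
  have e1 : (A * upperTri R n * Bᵀ) r s = ∑ pq ∈ pairsF n, A r pq.1 * B s pq.2 := by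
    calc (A * upperTri R n * Bᵀ) r s
        = ∑ j, (∑ i, A r i * upperTri R n i j) * B s j := by
          rw [Matrix.mul_apply]
          apply Finset.sum_congr rfl
          intro j _
          rw [Matrix.mul_apply, Matrix.transpose_apply]
      _ = ∑ j, ∑ i, (if i < j then A r i * B s j else 0) := by
          apply Finset.sum_congr rfl
          intro j _
          rw [Finset.sum_mul]
          apply Finset.sum_congr rfl
          intro i _
          simp only [upperTri, Matrix.of_apply]
          by_cases h : i < j
          · rw [if_pos h, if_pos h, mul_one]
          · rw [if_neg h, if_neg h, mul_zero, zero_mul]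
      _ = ∑ i, ∑ j, (if i < j then A r i * B s j else 0) := Finset.sum_comm
      _ = ∑ pq ∈ (univ ×ˢ univ : Finset (Fin n × Fin n)),
            (if pq.1 < pq.2 then A r pq.1 * B s pq.2 else 0) :=
          (Finset.sum_product univ univ
            (fun pq : Fin n × Fin n => if pq.1 < pq.2 then A r pq.1 * B s pq.2 else 0)).symm
      _ = ∑ pq ∈ pairsF n, A r pq.1 * B s pq.2 := by
          rw [pairsF, Finset.sum_filter, Finset.univ_product_univ]
  have e2 : (B * (upperTri R n)ᵀ * Aᵀ) r s = ∑ pq ∈ pairsF n, A s pq.1 * B r pq.2 := by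
    calc (B * (upperTri R n)ᵀ * Aᵀ) r s
        = ∑ j, (∑ i, B r i * upperTri R n j i) * A s j := by
          rw [Matrix.mul_apply]
          apply Finset.sum_congr rfl
          intro j _
          rw [Matrix.mul_apply, Matrix.transpose_apply]
          apply congrArg (· * A s j)
          apply Finset.sum_congr rfl
          intro i _
          rw [Matrix.transpose_apply]
      _ = ∑ j, ∑ i, (if j < i then B r i * A s j else 0) := by
          apply Finset.sum_congr rfl
          intro j _
          rw [Finset.sum_mul]
          apply Finset.sum_congr rfl
          intro i _
          simp only [upperTri, Matrix.of_apply]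
          by_cases h : j < i
          · rw [if_pos h, if_pos h, mul_one]
          · rw [if_neg h, if_neg h, mul_zero, zero_mul]
      _ = ∑ pq ∈ (univ ×ˢ univ : Finset (Fin n × Fin n)),
            (if pq.1 < pq.2 then B r pq.2 * A s pq.1 else 0) :=
          (Finset.sum_product univ univ
            (fun pq : Fin n × Fin n => if pq.1 < pq.2 then B r pq.2 * A s pq.1 else 0)).symm
      _ = ∑ pq ∈ pairsF n, A s pq.1 * B r pq.2 := by
          rw [pairsF, Finset.sum_filter, Finset.univ_product_univ]
          apply Finset.sum_congr rfl
          intro pq _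
          by_cases h : pq.1 < pq.2
          · rw [if_pos h, if_pos h, mul_comm]
          · rw [if_neg h, if_neg h]
  rw [Matrix.sub_apply, e1, e2, ← Finset.sum_sub_distrib]

/-! the `ε`-swaps -/

def swaps (ε : Fin k → Bool) : Equiv.Perm (Fin (2*k)) :=
  (E k).permCongr (Equiv.prodCongrRight
    (fun i => if ε i then Equiv.refl (Fin 2) else Equiv.swap 0 1))

lemma swaps_apply (ε : Fin k → Bool) (i : Fin k) (b : Fin 2) :
    swaps ε (E k (i, b)) = E k (i, if ε i then b else Equiv.swap (0 : Fin 2) 1 b) := by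
  unfold swaps
  rw [Equiv.permCongr_apply, Equiv.symm_apply_apply]
  by_cases h : ε i
  · simp [h]
  · simp [h]

lemma swaps_ev_t {ε : Fin k → Bool} {i : Fin k} (h : ε i = true) :
    swaps ε (ev k i) = ev k i := by
  rw [ev, swaps_apply, h, if_pos rfl]

lemma swaps_od_t {ε : Fin k → Bool} {i : Fin k} (h : ε i = true) :
    swaps ε (od k i) = od k i := by
  rw [od, swaps_apply, h, if_pos rfl]

lemma swaps_ev_f {ε : Fin k → Bool} {i : Fin k} (h : ε i = false) :
    swaps ε (ev k i) = od k i := by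
  rw [ev, swaps_apply, h]
  simp [od]

lemma swaps_od_f {ε : Fin k → Bool} {i : Fin k} (h : ε i = false) :
    swaps ε (od k i) = ev k i := by
  rw [od, swaps_apply, h]
  simp [ev]

lemma swaps_mul_self (ε : Fin k → Bool) : swaps ε * swaps ε = 1 := by
  ext c
  obtain ⟨⟨i, b⟩, rfl⟩ : ∃ p, E k p = c := ⟨(E k).symm c, (E k).apply_symm_apply c⟩
  have h2 : swaps ε (swaps ε (E k (i, b))) = E k (i, b) := by
    rw [swaps_apply, swaps_apply]
    by_cases h : ε i
    · rw [if_pos h, if_pos h]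
    · rw [if_neg h, if_neg h, Equiv.swap_apply_self]
  simp only [Equiv.Perm.mul_apply, Equiv.Perm.one_apply, h2]

lemma sign_swaps (ε : Fin k → Bool) :
    Equiv.Perm.sign (swaps ε) = ∏ i : Fin k, (if ε i then (1 : ℤˣ) else -1) := by
  unfold swaps
  rw [Equiv.Perm.sign_permCongr, Equiv.Perm.sign_prodCongrRight]
  apply Finset.prod_congr rfl
  intro i _
  by_cases h : ε i
  · rw [if_pos h, if_pos h]
    simp
  · rw [if_neg h, if_neg h]
    exact Equiv.Perm.sign_swap (by decide)

lemma term_eq (σ : Equiv.Perm (Fin (2*k))) (P : Fin k → Fin n × Fin n) (ε : Fin k → Bool) :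
    ((Equiv.Perm.sign σ : ℤ) : R) * ∏ i : Fin k,
      (if ε i then A (σ (ev k i)) (P i).1 * B (σ (od k i)) (P i).2
       else - (A (σ (od k i)) (P i).1 * B (σ (ev k i)) (P i).2))
    = val A B (σ * swaps ε, P) := by
  have hsgn : ((Equiv.Perm.sign (σ * swaps ε) : ℤ) : R)
      = ((Equiv.Perm.sign σ : ℤ) : R) * ∏ i : Fin k, (if ε i then (1 : R) else -1) := by
    rw [Equiv.Perm.sign_mul, sign_swaps]
    rw [Units.val_mul, Int.cast_mul]
    congr 1
    rw [← Units.coeHom_apply, map_prod, Int.cast_prod]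
    apply Finset.prod_congr rfl
    intro i _
    by_cases h : ε i
    · rw [if_pos h, if_pos h]; simp
    · rw [if_neg h, if_neg h]; simp
  have hterm : ∀ i : Fin k,
      (if ε i then A (σ (ev k i)) (P i).1 * B (σ (od k i)) (P i).2
       else - (A (σ (od k i)) (P i).1 * B (σ (ev k i)) (P i).2))
      = (if ε i then (1 : R) else -1) *
          (A ((σ * swaps ε) (ev k i)) (P i).1 * B ((σ * swaps ε) (od k i)) (P i).2) := by
    intro i
    by_cases h : ε i
    · rw [if_pos h, if_pos h, one_mul, Equiv.Perm.mul_apply, Equiv.Perm.mul_apply,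
        swaps_ev_t (by simpa using h), swaps_od_t (by simpa using h)]
    · rw [if_neg h, if_neg h, neg_one_mul, Equiv.Perm.mul_apply, Equiv.Perm.mul_apply,
        swaps_ev_f (by simpa using h), swaps_od_f (by simpa using h)]
  unfold val
  rw [hsgn]
  calc ((Equiv.Perm.sign σ : ℤ) : R) * ∏ i : Fin k,
        (if ε i then A (σ (ev k i)) (P i).1 * B (σ (od k i)) (P i).2
         else - (A (σ (od k i)) (P i).1 * B (σ (ev k i)) (P i).2))
      = ((Equiv.Perm.sign σ : ℤ) : R) * ∏ i : Fin k, ((if ε i then (1 : R) else -1) *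
          (A ((σ * swaps ε) (ev k i)) (P i).1 * B ((σ * swaps ε) (od k i)) (P i).2)) := by
        rw [Finset.prod_congr rfl (fun i _ => hterm i)]
    _ = _ := by
        rw [Finset.prod_mul_distrib]
        ring

lemma pf_expand (σ : Equiv.Perm (Fin (2*k))) :
    ((Equiv.Perm.sign σ : ℤ) : R) * ∏ i : Fin k,
        (A * upperTri R n * Bᵀ - B * (upperTri R n)ᵀ * Aᵀ) (σ (ev k i)) (σ (od k i))
    = ∑ P ∈ Fintype.piFinset (fun _ : Fin k => pairsF n), ∑ ε : Fin k → Bool,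
        val A B (σ * swaps ε, P) := by
  have h1 : ∏ i : Fin k,
      (A * upperTri R n * Bᵀ - B * (upperTri R n)ᵀ * Aᵀ) (σ (ev k i)) (σ (od k i))
      = ∑ P ∈ Fintype.piFinset (fun _ : Fin k => pairsF n), ∏ i : Fin k,
          (A (σ (ev k i)) (P i).1 * B (σ (od k i)) (P i).2
            - A (σ (od k i)) (P i).1 * B (σ (ev k i)) (P i).2) := by
    have e := Finset.prod_univ_sum (fun _ : Fin k => pairsF n)
      (fun i pq => A (σ (ev k i)) pq.1 * B (σ (od k i)) pq.2
        - A (σ (od k i)) pq.1 * B (σ (ev k i)) pq.2)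
    rw [← e]
    apply Finset.prod_congr rfl
    intro i _
    exact entry_eq A B (σ (ev k i)) (σ (od k i))
  rw [h1, Finset.mul_sum]
  apply Finset.sum_congr rfl
  intro P _
  have h2 : ∏ i : Fin k,
      (A (σ (ev k i)) (P i).1 * B (σ (od k i)) (P i).2
        - A (σ (od k i)) (P i).1 * B (σ (ev k i)) (P i).2)
      = ∑ ε : Fin k → Bool, ∏ i : Fin k,
          (if ε i then A (σ (ev k i)) (P i).1 * B (σ (od k i)) (P i).2
           else - (A (σ (od k i)) (P i).1 * B (σ (ev k i)) (P i).2)) := by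
    have h3 : ∀ i : Fin k,
        A (σ (ev k i)) (P i).1 * B (σ (od k i)) (P i).2
          - A (σ (od k i)) (P i).1 * B (σ (ev k i)) (P i).2
        = ∑ b : Bool, (if b then A (σ (ev k i)) (P i).1 * B (σ (od k i)) (P i).2
            else - (A (σ (od k i)) (P i).1 * B (σ (ev k i)) (P i).2)) := by
      intro i
      rw [Fintype.sum_bool, if_pos rfl, if_neg (by decide), sub_eq_add_neg]
    have e := Finset.prod_univ_sum (fun _ : Fin k => (univ : Finset Bool))
      (fun i b => if b then A (σ (ev k i)) (P i).1 * B (σ (od k i)) (P i).2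
        else - (A (σ (od k i)) (P i).1 * B (σ (ev k i)) (P i).2))
    rw [Finset.prod_congr rfl (fun i _ => h3 i), e, Fintype.piFinset_univ]
  rw [h2, Finset.mul_sum]
  apply Finset.sum_congr rfl
  intro ε _
  exact term_eq A B σ P ε

/-! ### the matching-side bijection -/

lemma mem_pairsF {pq : Fin n × Fin n} : pq ∈ pairsF n ↔ pq.1 < pq.2 := by
  unfold pairsF
  rw [mem_filter]
  exact ⟨fun h => h.2, fun h => ⟨mem_univ _, h⟩⟩

def mkey (x : Om k n) (i : Fin k) : Fin (2*k) := min (x.1 (ev k i)) (x.1 (od k i))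

lemma mkey_inj (x : Om k n) : Function.Injective (mkey x) := by
  intro i j h
  unfold mkey at h
  rcases min_cases (x.1 (ev k i)) (x.1 (od k i)) with ⟨h1, -⟩ | ⟨h1, -⟩ <;>
    rcases min_cases (x.1 (ev k j)) (x.1 (od k j)) with ⟨h2, -⟩ | ⟨h2, -⟩ <;>
    rw [h1, h2] at h
  · exact ev_inj (x.1.injective h)
  · exact absurd (x.1.injective h) (ev_ne_od i j)
  · exact absurd (x.1.injective h).symm (ev_ne_od j i)
  · exact od_inj (x.1.injective h)

lemma mkey_relabel (γ : Equiv.Perm (Fin k)) (x : Om k n) :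
    mkey (relabel γ x) = mkey x ∘ γ := by
  funext i
  unfold mkey relabel
  simp [Equiv.Perm.mul_apply]

def epsOf (x : Om k n) (i : Fin k) : Bool := decide (x.1 (ev k i) < x.1 (od k i))

lemma sig_ev (y : Om k n) (i : Fin k) :
    (y.1 * swaps (epsOf y)) (ev k i) = mkey y i := by
  rw [Equiv.Perm.mul_apply]
  by_cases h : y.1 (ev k i) < y.1 (od k i)
  · rw [swaps_ev_t (by simp [epsOf, h]), mkey, min_eq_left (le_of_lt h)]
  · rw [swaps_ev_f (by simp [epsOf, h]), mkey, min_eq_right (le_of_not_gt h)]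

lemma sig_ev_lt_od (y : Om k n) (i : Fin k) :
    (y.1 * swaps (epsOf y)) (ev k i) < (y.1 * swaps (epsOf y)) (od k i) := by
  rw [Equiv.Perm.mul_apply, Equiv.Perm.mul_apply]
  by_cases h : y.1 (ev k i) < y.1 (od k i)
  · rw [swaps_ev_t (by simp [epsOf, h]), swaps_od_t (by simp [epsOf, h])]
    exact h
  · rw [swaps_ev_f (by simp [epsOf, h]), swaps_od_f (by simp [epsOf, h])]
    rcases lt_or_eq_of_le (le_of_not_gt h) with h2 | h2
    · exact h2
    · exact absurd (y.1.injective h2).symm (ev_ne_od i i)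

def Psi (x : Om k n) :
    Equiv.Perm (Fin (2*k)) × ((Fin k → Fin n × Fin n) × (Fin k → Bool)) :=
  ((relabel (Tuple.sort (mkey x)) x).1 * swaps (epsOf (relabel (Tuple.sort (mkey x)) x)),
   ((relabel (Tuple.sort (mkey x)) x).2, epsOf (relabel (Tuple.sort (mkey x)) x)))

lemma relabel_one : relabel (1 : Equiv.Perm (Fin k)) x = x := by
  unfold relabel
  rw [blockPerm_one, mul_one]
  exact Prod.ext rfl (funext fun i => rfl)

lemma relabel_relabel (γ δ : Equiv.Perm (Fin k)) :
    relabel δ (relabel γ x) = relabel (γ * δ) x := by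
  unfold relabel
  refine Prod.ext ?_ ?_
  · show x.1 * blockPerm γ * blockPerm δ = x.1 * blockPerm (γ * δ)
    rw [mul_assoc, blockPerm_mul]
  · funext i
    rfl

lemma pfaffian_eq (Y : Matrix (Fin (2*k)) (Fin (2*k)) R) :
    pfaffian Y = ∑ σ ∈ univ.filter (fun σ : Equiv.Perm (Fin (2*k)) =>
      (∀ i : Fin k, σ (ev k i) < σ (od k i)) ∧
      (∀ i j : Fin k, i < j → σ (ev k i) < σ (ev k j))),
    ((Equiv.Perm.sign σ : ℤ) : R) * ∏ i : Fin k, Y (σ (ev k i)) (σ (od k i)) := rfl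

lemma rhs_eq :
    pfaffian (A * upperTri R n * Bᵀ - B * (upperTri R n)ᵀ * Aᵀ)
    = ∑ x ∈ univ.filter (fun x : Om k n => pairP x ∧ can x), val A B x := by
  classical
  set Y := A * upperTri R n * Bᵀ - B * (upperTri R n)ᵀ * Aᵀ with hY
  set Mfil := univ.filter (fun σ : Equiv.Perm (Fin (2*k)) =>
      (∀ i : Fin k, σ (ev k i) < σ (od k i)) ∧
      (∀ i j : Fin k, i < j → σ (ev k i) < σ (ev k j))) with hMfil
  set piF := Fintype.piFinset (fun _ : Fin k => pairsF n) with hpiF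
  calc pfaffian Y
      = ∑ σ ∈ Mfil, ((Equiv.Perm.sign σ : ℤ) : R)
          * ∏ i : Fin k, Y (σ (ev k i)) (σ (od k i)) := pfaffian_eq Y
    _ = ∑ σ ∈ Mfil, ∑ P ∈ piF, ∑ ε : Fin k → Bool, val A B (σ * swaps ε, P) := by
        apply Finset.sum_congr rfl
        intro σ _
        exact pf_expand A B σ
    _ = ∑ z ∈ Mfil ×ˢ (piF ×ˢ (univ : Finset (Fin k → Bool))),
          val A B (z.1 * swaps z.2.2, z.2.1) := by
        rw [Finset.sum_product
          (f := fun z : Equiv.Perm (Fin (2*k)) × ((Fin k → Fin n × Fin n) × (Fin k → Bool)) =>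
            val A B (z.1 * swaps z.2.2, z.2.1))]
        apply Finset.sum_congr rfl
        intro σ _
        rw [Finset.sum_product
          (f := fun y : (Fin k → Fin n × Fin n) × (Fin k → Bool) =>
            val A B (σ * swaps y.2, y.1))]
    _ = ∑ x ∈ univ.filter (fun x : Om k n => pairP x ∧ can x), val A B x := by
        apply Finset.sum_nbij' (i := fun z => canon (z.1 * swaps z.2.2, z.2.1)) (j := Psi)
        · -- maps into target
          rintro ⟨σ, P, ε⟩ hz
          rw [Finset.mem_product, Finset.mem_product] at hz
          obtain ⟨hσ, hP, -⟩ := hz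
          rw [Finset.mem_filter]
          refine ⟨mem_univ _, ?_, ?_⟩
          · apply pairP_relabel
            intro i
            exact mem_pairsF.mp ((Fintype.mem_piFinset.mp hP) i)
          · exact can_of_strictMono (strictMono_skey_canon _)
        · -- maps into source
          intro x hx
          rw [Finset.mem_filter] at hx
          obtain ⟨-, hp, hcan⟩ := hx
          unfold Psi
          rw [Finset.mem_product]
          constructor
          · rw [hMfil, Finset.mem_filter]
            refine ⟨mem_univ _, ?_, ?_⟩
            · intro i
              exact sig_ev_lt_od _ i
            · intro i j hij
              rw [sig_ev, sig_ev, mkey_relabel]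
              exact ((Tuple.monotone_sort (mkey x)).strictMono_of_injective
                ((mkey_inj x).comp (Equiv.injective _))) hij
          · rw [Finset.mem_product]
            refine ⟨?_, mem_univ _⟩
            rw [hpiF, Fintype.mem_piFinset]
            intro i
            exact mem_pairsF.mpr (hp _)
        · -- Psi (Phi z) = z
          rintro ⟨σ, P, ε⟩ hz
          rw [Finset.mem_product, hMfil, Finset.mem_filter] at hz
          obtain ⟨⟨-, hσ1, hσ2⟩, -⟩ := hz
          set y₀ : Om k n := (σ * swaps ε, P) with hy₀
          have hcanon : canon y₀ = relabel (Tuple.sort (skey y₀)) y₀ := rfl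
          set δ := Tuple.sort (skey y₀) with hδ
          have hm : mkey y₀ = fun i => σ (ev k i) := by
            funext i
            show min (y₀.1 (ev k i)) (y₀.1 (od k i)) = σ (ev k i)
            by_cases hb : ε i
            · rw [hy₀]
              show min ((σ * swaps ε) (ev k i)) ((σ * swaps ε) (od k i)) = σ (ev k i)
              rw [Equiv.Perm.mul_apply, Equiv.Perm.mul_apply,
                swaps_ev_t (by simpa using hb), swaps_od_t (by simpa using hb)]
              exact min_eq_left (le_of_lt (hσ1 i))
            · rw [hy₀]
              show min ((σ * swaps ε) (ev k i)) ((σ * swaps ε) (od k i)) = σ (ev k i)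
              rw [Equiv.Perm.mul_apply, Equiv.Perm.mul_apply,
                swaps_ev_f (by simpa using hb), swaps_od_f (by simpa using hb)]
              exact min_eq_right (le_of_lt (hσ1 i))
          have hmc : mkey (canon y₀) = mkey y₀ ∘ δ := by
            rw [hcanon, mkey_relabel]
          have hsort : Tuple.sort (mkey (canon y₀)) = δ⁻¹ := by
            apply sort_unique
            · rw [hmc]
              exact (mkey_inj y₀).comp (Equiv.injective _)
            · have he : mkey (canon y₀) ∘ (δ⁻¹ : Equiv.Perm (Fin k)) = mkey y₀ := by
                funext i
                rw [hmc]
                show mkey y₀ (δ (δ⁻¹ i)) = mkey y₀ i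
                rw [Equiv.Perm.apply_inv_self]
              rw [he, hm]
              intro a b hab
              rcases eq_or_lt_of_le hab with h | h
              · rw [h]
              · exact le_of_lt (hσ2 a b h)
          have hrel : relabel δ⁻¹ (canon y₀) = y₀ := by
            rw [hcanon, relabel_relabel]
            have hδδ : δ * δ⁻¹ = 1 := by group
            rw [hδδ, relabel_one]
          have heps : epsOf y₀ = ε := by
            funext i
            show decide (y₀.1 (ev k i) < y₀.1 (od k i)) = ε i
            by_cases hb : ε i
            · show decide ((σ * swaps ε) (ev k i) < (σ * swaps ε) (od k i)) = ε i
              rw [Equiv.Perm.mul_apply, Equiv.Perm.mul_apply,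
                swaps_ev_t (by simpa using hb), swaps_od_t (by simpa using hb),
                decide_eq_true (hσ1 i)]
              simp [hb]
            · show decide ((σ * swaps ε) (ev k i) < (σ * swaps ε) (od k i)) = ε i
              rw [Equiv.Perm.mul_apply, Equiv.Perm.mul_apply,
                swaps_ev_f (by simpa using hb), swaps_od_f (by simpa using hb),
                decide_eq_false (asymm (hσ1 i))]
              rw [Bool.not_eq_true] at hb
              rw [hb]
          show Psi (canon y₀) = (σ, (P, ε))
          unfold Psi
          rw [hsort, hrel, heps]
          refine Prod.ext ?_ rfl
          show (σ * swaps ε) * swaps ε = σ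
          rw [mul_assoc, swaps_mul_self, mul_one]
        · -- Phi (Psi x) = x
          intro x hx
          rw [Finset.mem_filter] at hx
          obtain ⟨-, hp, hcan⟩ := hx
          show canon (((relabel (Tuple.sort (mkey x)) x).1
              * swaps (epsOf (relabel (Tuple.sort (mkey x)) x)))
              * swaps (epsOf (relabel (Tuple.sort (mkey x)) x)),
            (relabel (Tuple.sort (mkey x)) x).2) = x
          rw [mul_assoc, swaps_mul_self, mul_one]
          have : ((relabel (Tuple.sort (mkey x)) x).1, (relabel (Tuple.sort (mkey x)) x).2)
              = relabel (Tuple.sort (mkey x)) x := rfl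
          rw [this, canon_relabel, canon_eq_self _ (monotone_of_can hcan)]
        · -- values
          intro z _
          exact (val_canon A B _).symm

end MSF

/-- Asymmetric extension of Okada's minor summation formula (first version):
for `m = 2k` even,
`Σ_{1≤i_1<j_1≤i_2<j_2≤⋯≤i_{m/2}<j_{m/2}≤n} det(A^{i_1}B^{j_1}⋯A^{i_{m/2}}B^{j_{m/2}})
= Pf(A·U_n·Bᵗ − B·U_nᵗ·Aᵗ)`.
Each summand is indexed by the sequence `d` of the `m` column indices
`i_1, j_1, i_2, j_2, …` (so `d_s < d_{s+1}` for even positions `s` and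
`d_s ≤ d_{s+1}` for odd positions `s`, 0-based; the columns at even positions are
taken from `A`, those at odd positions from `B`). -/
theorem sum_det_eq_pf_upperTri {R : Type*} [CommRing R] (k n : ℕ) (hk : 0 < k) (hn : 0 < n)
    (A B : Matrix (Fin (2*k)) (Fin n) R) :
    (∑ d ∈ Finset.univ.filter (fun d : Fin (2*k) → Fin n =>
        ∀ s t : Fin (2*k), (s:ℕ) + 1 = (t:ℕ) →
          ((s:ℕ) % 2 = 0 → d s < d t) ∧ ((s:ℕ) % 2 = 1 → d s ≤ d t)),
      (Matrix.of fun r c : Fin (2*k) =>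
        if (c:ℕ) % 2 = 0 then A r (d c) else B r (d c)).det)
      = pfaffian (A * upperTri R n * Bᵀ - B * (upperTri R n)ᵀ * Aᵀ) := by
  classical
  have hfil : (Finset.univ.filter (fun d : Fin (2*k) → Fin n =>
        ∀ s t : Fin (2*k), (s:ℕ) + 1 = (t:ℕ) →
          ((s:ℕ) % 2 = 0 → d s < d t) ∧ ((s:ℕ) % 2 = 1 → d s ≤ d t)))
      = Finset.univ.filter (fun d => MSF.dcond d) := by
    apply Finset.filter_congr
    intro d _
    exact Iff.rfl
  rw [hfil, MSF.lhs_eq A B, MSF.filter_seq_eq, MSF.rhs_eq A B]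
  have hsplit := Finset.sum_filter_add_sum_filter_not
    (Finset.univ.filter (fun x : MSF.Om k n => MSF.pairP x ∧ MSF.can x)) MSF.bad (MSF.val A B)
  have h1 : (Finset.univ.filter (fun x : MSF.Om k n => MSF.pairP x ∧ MSF.can x)).filter MSF.bad
      = Finset.univ.filter (fun x : MSF.Om k n => MSF.pairP x ∧ MSF.can x ∧ MSF.bad x) := by
    rw [Finset.filter_filter]
    apply Finset.filter_congr
    intro x _
    tauto
  have h2 : (Finset.univ.filter (fun x : MSF.Om k n => MSF.pairP x ∧ MSF.can x)).filter
        (fun x => ¬ MSF.bad x)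
      = Finset.univ.filter (fun x : MSF.Om k n =>
          MSF.pairP x ∧ MSF.can x ∧ ¬ MSF.bad x) := by
    rw [Finset.filter_filter]
    apply Finset.filter_congr
    intro x _
    tauto
  rw [h1, h2, MSF.sum_bad_zero A B, zero_add] at hsplit
  exact hsplit
end
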